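/- arXiv:math/0203262 — 4 statements merged into one kernel-verified Lean document; each statement's English description precedes it below -/
import Mathlib

section
/- For every positive integer m there exists a function g from {0,1}^{m^2} to {0,1,...,m} such that (i) flipping any single coordinate changes the value of g by at most 1, and (ii) for every y in {0,1,...,m}, the probability under the uniform measure on {0,1}^{m^2} that g(x)=y is at most c/m for some universal constant c>0. -/
open Finset


-- central binomial squared bound
lemma cb_sq (k : ℕ) : (2*k+1) * (Nat.centralBinom k)^2 ≤ 4^(2*k) := by
  induction k with
  | zero => simp [Nat.centralBinom]
  | succ k ih =>
    have hrec := Nat.succ_mul_centralBinom_succ k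
    have h1 : (k+1)^2 * ((2*(k+1)+1) * (Nat.centralBinom (k+1))^2)
        = (2*(k+1)+1) * ((k+1) * Nat.centralBinom (k+1))^2 := by ring
    have h2 : (2*(k+1)+1) * ((k+1) * Nat.centralBinom (k+1))^2
        = (2*k+3) * (2*(2*k+1))^2 * (Nat.centralBinom k)^2 := by rw [hrec]; ring
    have h3 : (2*k+3) * (2*(2*k+1))^2 * (Nat.centralBinom k)^2
        = 4 * ((2*k+1)*(2*k+3)) * ((2*k+1) * (Nat.centralBinom k)^2) := by ring
    have h4 : 4 * ((2*k+1)*(2*k+3)) * ((2*k+1) * (Nat.centralBinom k)^2)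
        ≤ 4 * ((2*k+2)*(2*k+2)) * 4^(2*k) := by
      apply Nat.mul_le_mul
      · apply Nat.mul_le_mul_left; nlinarith
      · exact ih
    have h5 : 4 * ((2*k+2)*(2*k+2)) * 4^(2*k) = (k+1)^2 * 4^(2*(k+1)) := by ring
    have : (k+1)^2 * ((2*(k+1)+1) * (Nat.centralBinom (k+1))^2) ≤ (k+1)^2 * 4^(2*(k+1)) := by
      rw [h1, h2, h3, ← h5]; exact h4
    exact Nat.le_of_mul_le_mul_left this (by positivity)

-- middle binomial bound:  n * C(n, n/2)^2 ≤ 4^n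
lemma mid_sq (n : ℕ) : n * (n.choose (n/2))^2 ≤ 4^n := by
  rcases Nat.even_or_odd n with ⟨k, hk⟩ | ⟨k, hk⟩
  · subst hk
    have : (k+k) = 2*k := by ring
    rw [this]
    have h := cb_sq k
    have : (2*k)/2 = k := by omega
    rw [this]
    have : (2*k).choose k = Nat.centralBinom k := rfl
    rw [this]
    exact le_trans (Nat.mul_le_mul_right _ (by omega)) h
  · subst hk
    have hdiv : (2*k+1)/2 = k := by omega
    rw [hdiv]
    have hle : (2*k+1).choose k ≤ 2 * Nat.centralBinom k := by
      have h1 : (2*k+1).choose k = (2*k+1).choose (k+1) := by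
        rw [← Nat.choose_symm (by omega : k+1 ≤ 2*k+1)]
        congr 1
        omega
      have hp : (2*k+1).choose (k+1) = (2*k).choose k + (2*k).choose (k+1) :=
        Nat.choose_succ_succ (2*k) k
      have h2 : (2*k).choose (k+1) ≤ (2*k).choose ((2*k)/2) := Nat.choose_le_middle _ _
      have h3 : (2*k)/2 = k := by omega
      rw [h3] at h2
      have h4 : (2*k).choose k = Nat.centralBinom k := rfl
      omega
    calc (2*k+1) * ((2*k+1).choose k)^2
        ≤ (2*k+1) * (2 * Nat.centralBinom k)^2 := by
          exact Nat.mul_le_mul_left _ (Nat.pow_le_pow_left hle 2)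
      _ = 4 * ((2*k+1) * (Nat.centralBinom k)^2) := by ring
      _ ≤ 4 * 4^(2*k) := Nat.mul_le_mul_left _ (cb_sq k)
      _ = 4^(2*k+1) := by ring

-- m * C(m², m²/2) ≤ 2^(m²)
lemma m_mid (m : ℕ) : m * ((m^2).choose (m^2/2)) ≤ 2^(m^2) := by
  have h := mid_sq (m^2)
  have h2 : (m * ((m^2).choose (m^2/2)))^2 ≤ (2^(m^2))^2 := by
    calc (m * ((m^2).choose (m^2/2)))^2 = m^2 * ((m^2).choose (m^2/2))^2 := by ring
      _ ≤ 4^(m^2) := h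
      _ = (2^(m^2))^2 := by rw [show (4:ℕ)=2^2 from rfl, ← pow_mul, ← pow_mul, Nat.mul_comm]
  exact (Nat.pow_le_pow_iff_left (n := 2) (by norm_num)).mp h2


lemma mono_inc (n : ℕ) : ∀ j i, i ≤ j → j ≤ n/2 → n.choose i ≤ n.choose j := by
  intro j
  induction j with
  | zero => intro i hi _; interval_cases i; rfl
  | succ j ih =>
    intro i hi hj
    rcases Nat.eq_or_lt_of_le hi with rfl | hlt
    · rfl
    · exact le_trans (ih i (by omega) (by omega))
        (Nat.choose_le_succ_of_lt_half_left (by omega))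

lemma mono_dec (n i j : ℕ) (h1 : (n+1)/2 ≤ i) (h2 : i ≤ j) (h3 : j ≤ n) :
    n.choose j ≤ n.choose i := by
  have hi : n.choose i = n.choose (n - i) := (Nat.choose_symm (by omega)).symm
  have hj : n.choose j = n.choose (n - j) := (Nat.choose_symm h3).symm
  rw [hi, hj]
  exact mono_inc n (n - i) (n - j) (by omega) (by omega)

lemma gap_lem (q u v : ℕ) (hq : 0 < q) (h : u % q = v % q) (huv : u < v) : u + q ≤ v := by
  have hdvd : q ∣ v - u := (Nat.modEq_iff_dvd' (le_of_lt huv)).mp h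
  have := Nat.le_of_dvd (by omega) hdvd
  omega

lemma key (n q r : ℕ) (hq : 2 ≤ q) :
    q * ∑ j ∈ (range (n+1)).filter (fun j => j % q = r), n.choose j
      ≤ 2 * 2 ^ n + 2 * (q * n.choose (n / 2)) := by
  set T := (range (n+1)).filter (fun j => j % q = r) with hT
  have hTmem : ∀ j ∈ T, j ≤ n ∧ j % q = r := by
    intro j hj; simp only [hT, mem_filter, mem_range] at hj; omega
  have hgap : ∀ u ∈ T, ∀ v ∈ T, u < v → u + q ≤ v := by
    intro u hu v hv huv
    exact gap_lem q u v (by omega) ((hTmem u hu).2.trans (hTmem v hv).2.symm) huv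
  classical
  set A := T.filter (fun j => j + q - 1 ≤ n / 2) with hA
  set R := T.filter (fun j => ¬ (j + q - 1 ≤ n / 2)) with hR
  set B := R.filter (fun j => (n+1)/2 + q - 1 ≤ j) with hB
  set M := R.filter (fun j => ¬ ((n+1)/2 + q - 1 ≤ j)) with hM
  have hsplit : q * ∑ j ∈ T, n.choose j
      = ∑ j ∈ A, q * n.choose j + (∑ j ∈ B, q * n.choose j + ∑ j ∈ M, q * n.choose j) := by
    rw [mul_sum, ← sum_filter_add_sum_filter_not T (fun j => j + q - 1 ≤ n / 2),
      ← sum_filter_add_sum_filter_not R (fun j => (n+1)/2 + q - 1 ≤ j)]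
  -- A bound
  have hAbound : ∑ j ∈ A, q * n.choose j ≤ 2 ^ n := by
    have hdisj : (A : Set ℕ).PairwiseDisjoint (fun j => Ico j (j+q)) := by
      intro u hu v hv huv
      rw [mem_coe] at hu hv
      have hu' : u ∈ T := by simp only [hA, mem_filter] at hu; exact hu.1
      have hv' : v ∈ T := by simp only [hA, mem_filter] at hv; exact hv.1
      have : u + q ≤ v ∨ v + q ≤ u := by
        rcases Nat.lt_trichotomy u v with h|h|h
        · exact Or.inl (hgap u hu' v hv' h)
        · exact absurd h huv
        · exact Or.inr (hgap v hv' u hu' h)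
      apply Finset.disjoint_left.mpr
      intro i hi1 hi2
      simp only [mem_Ico] at hi1 hi2
      omega
    calc ∑ j ∈ A, q * n.choose j
        ≤ ∑ j ∈ A, ∑ i ∈ Ico j (j+q), n.choose i := by
          apply sum_le_sum
          intro j hj
          simp only [hA, mem_filter] at hj
          have hcard : (Ico j (j+q)).card = q := by rw [Nat.card_Ico]; omega
          have := Finset.card_nsmul_le_sum (Ico j (j+q)) (fun i => n.choose i) (n.choose j) ?_
          · rw [hcard] at this; simpa [smul_eq_mul] using this
          · intro i hi
            simp only [mem_Ico] at hi
            exact mono_inc n i j hi.1 (by omega)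
      _ = ∑ i ∈ A.biUnion (fun j => Ico j (j+q)), n.choose i := (sum_biUnion hdisj).symm
      _ ≤ ∑ i ∈ range (n+1), n.choose i := by
          apply sum_le_sum_of_subset
          intro i hi
          simp only [mem_biUnion, mem_Ico] at hi
          obtain ⟨j, hj, hij⟩ := hi
          simp only [hA, mem_filter] at hj
          simp only [mem_range]
          omega
      _ = 2 ^ n := Nat.sum_range_choose n
  -- B bound
  have hBbound : ∑ j ∈ B, q * n.choose j ≤ 2 ^ n := by
    have hBT : ∀ j ∈ B, j ∈ T := by
      intro j hj
      simp only [hB, hR, mem_filter] at hj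
      exact hj.1.1
    have hBc : ∀ j ∈ B, (n+1)/2 + q - 1 ≤ j ∧ j ≤ n := by
      intro j hj
      refine ⟨?_, (hTmem j (hBT j hj)).1⟩
      simp only [hB, mem_filter] at hj
      exact hj.2
    have hdisj : (B : Set ℕ).PairwiseDisjoint (fun j => Ico (j+1-q) (j+1)) := by
      intro u hu v hv huv
      rw [mem_coe] at hu hv
      have : u + q ≤ v ∨ v + q ≤ u := by
        rcases Nat.lt_trichotomy u v with h|h|h
        · exact Or.inl (hgap u (hBT u hu) v (hBT v hv) h)
        · exact absurd h huv
        · exact Or.inr (hgap v (hBT v hv) u (hBT u hu) h)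
      have hu2 := hBc u hu
      have hv2 := hBc v hv
      apply Finset.disjoint_left.mpr
      intro i hi1 hi2
      simp only [mem_Ico] at hi1 hi2
      omega
    calc ∑ j ∈ B, q * n.choose j
        ≤ ∑ j ∈ B, ∑ i ∈ Ico (j+1-q) (j+1), n.choose i := by
          apply sum_le_sum
          intro j hj
          have hj2 := hBc j hj
          have hcard : (Ico (j+1-q) (j+1)).card = q := by rw [Nat.card_Ico]; omega
          have := Finset.card_nsmul_le_sum (Ico (j+1-q) (j+1)) (fun i => n.choose i) (n.choose j) ?_
          · rw [hcard] at this; simpa [smul_eq_mul] using this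
          · intro i hi
            simp only [mem_Ico] at hi
            exact mono_dec n i j (by omega) (by omega) (by omega)
      _ = ∑ i ∈ B.biUnion (fun j => Ico (j+1-q) (j+1)), n.choose i := (sum_biUnion hdisj).symm
      _ ≤ ∑ i ∈ range (n+1), n.choose i := by
          apply sum_le_sum_of_subset
          intro i hi
          simp only [mem_biUnion, mem_Ico] at hi
          obtain ⟨j, hj, hij⟩ := hi
          have := hBc j hj
          simp only [mem_range]
          omega
      _ = 2 ^ n := Nat.sum_range_choose n
  -- M bound
  have hMT : ∀ j ∈ M, j ∈ T := by
    intro j hj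
    simp only [hM, hR, mem_filter] at hj
    exact hj.1.1
  have hMwin : ∀ j ∈ M, n/2 + 2 ≤ j + q ∧ j + 1 < (n+1)/2 + q := by
    intro j hj
    simp only [hM, hR, mem_filter] at hj
    omega
  have hMcard : M.card ≤ 2 := by
    by_contra hc
    push_neg at hc
    rw [Finset.two_lt_card_iff] at hc
    obtain ⟨a, b, c, ha, hb, hcM, hab, hac, hbc⟩ := hc
    have gof : ∀ u v, u ∈ M → v ∈ M → u ≠ v → u + q ≤ v ∨ v + q ≤ u := by
      intro u v hu hv huv
      rcases Nat.lt_trichotomy u v with h|h|h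
      · exact Or.inl (hgap u (hMT u hu) v (hMT v hv) h)
      · exact absurd h huv
      · exact Or.inr (hgap v (hMT v hv) u (hMT u hu) h)
    have h1 := gof a b ha hb hab
    have h2 := gof a c ha hcM hac
    have h3 := gof b c hb hcM hbc
    have w1 := hMwin a ha
    have w2 := hMwin b hb
    have w3 := hMwin c hcM
    rcases h1 with h1|h1 <;> rcases h2 with h2|h2 <;> rcases h3 with h3|h3 <;> omega
  have hMbound : ∑ j ∈ M, q * n.choose j ≤ 2 * (q * n.choose (n/2)) := by
    calc ∑ j ∈ M, q * n.choose j
        ≤ M.card * (q * n.choose (n/2)) := by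
          have := Finset.sum_le_card_nsmul M (fun j => q * n.choose j) (q * n.choose (n/2)) ?_
          · simpa [smul_eq_mul] using this
          · intro j _
            exact Nat.mul_le_mul_left _ (Nat.choose_le_middle _ _)
      _ ≤ 2 * (q * n.choose (n/2)) := Nat.mul_le_mul_right _ hMcard
  rw [hsplit]
  omega


lemma cardS (N j : ℕ) :
    (univ.filter fun x : Fin N → Bool => (univ.filter fun i => x i = true).card = j).card
      = N.choose j := by
  classical
  have h1 : ((univ : Finset (Fin N)).powersetCard j).card = N.choose j := by
    rw [Finset.card_powersetCard, Finset.card_univ, Fintype.card_fin]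
  rw [← h1]
  apply Finset.card_nbij' (i := fun x => univ.filter fun i => x i = true)
    (j := fun s => fun i => decide (i ∈ s))
  · intro x hx
    simp only [mem_coe, mem_filter, mem_univ, true_and] at hx
    simp only [mem_coe, Finset.mem_powersetCard]
    exact ⟨Finset.subset_univ _, hx⟩
  · intro s hs
    simp only [mem_coe, Finset.mem_powersetCard] at hs
    simp only [mem_coe, mem_filter, mem_univ, true_and]
    rw [← hs.2]
    congr 1
    ext i
    simp
  · intro x hx
    funext i
    simp
  · intro s hs
    ext i
    simp

def saw (m j : ℕ) : ℕ := min (j % (2*m)) (2*m - j % (2*m))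

lemma saw_le (m j : ℕ) (hm : 0 < m) : saw m j ≤ m := by
  have : j % (2*m) < 2*m := Nat.mod_lt _ (by omega)
  unfold saw
  omega

lemma saw_step (m t : ℕ) (hm : 0 < m) :
    saw m (t+1) ≤ saw m t + 1 ∧ saw m t ≤ saw m (t+1) + 1 := by
  have h1 : t % (2*m) < 2*m := Nat.mod_lt _ (by omega)
  have key2 : (t+1) % (2*m) = t % (2*m) + 1 ∨ (t % (2*m) = 2*m - 1 ∧ (t+1) % (2*m) = 0) := by
    have hadd := Nat.add_mod t 1 (2*m)
    have h1m : 1 % (2*m) = 1 := Nat.mod_eq_of_lt (by omega)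
    by_cases h : t % (2*m) = 2*m - 1
    · right
      refine ⟨h, ?_⟩
      rw [hadd, h1m, h, Nat.sub_add_cancel (by omega), Nat.mod_self]
    · left
      rw [hadd, h1m, Nat.mod_eq_of_lt (by omega)]
  unfold saw
  rcases key2 with h | ⟨h, h'⟩ <;> omega

lemma card_level (N : ℕ) (p : ℕ → Prop) [DecidablePred p] :
    (univ.filter fun x : Fin N → Bool => p ((univ.filter fun i => x i = true).card)).card
      = ∑ j ∈ (range (N+1)).filter (fun j => p j), N.choose j := by
  classical
  have hset : (univ.filter fun x : Fin N → Bool => p ((univ.filter fun i => x i = true).card))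
      = ((range (N+1)).filter (fun j => p j)).biUnion
          (fun j => univ.filter fun x : Fin N → Bool =>
            (univ.filter fun i => x i = true).card = j) := by
    ext x
    simp only [mem_biUnion, mem_filter, mem_univ, true_and, mem_range]
    constructor
    · intro h
      refine ⟨(univ.filter fun i => x i = true).card, ⟨?_, h⟩, rfl⟩
      have h2 := Finset.card_filter_le univ (fun i => x i = true)
      have h3 : (univ : Finset (Fin N)).card = N := by
        rw [Finset.card_univ, Fintype.card_fin]
      omega
    · rintro ⟨jj, ⟨_, hj⟩, hxj⟩
      rw [hxj]; exact hj
  rw [hset, card_biUnion]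
  · exact sum_congr rfl fun j _ => cardS N j
  · intro u _ v _ huv
    apply Finset.disjoint_left.mpr
    intro x hx1 hx2
    simp only [mem_filter, mem_univ, true_and] at hx1 hx2
    exact huv (hx1 ▸ hx2 ▸ rfl)

/-- There is a universal constant `c > 0` such that for every positive
integer `m` there is a function `g : {0,1}^{m²} → {0,…,m}` whose value changes by at
most 1 under any single coordinate flip, and such that each level set `{g = y}` has
uniform probability at most `c/m`. -/
theorem stmt0 :
    ∃ c : ℝ, 0 < c ∧ ∀ m : ℕ, 0 < m →
      ∃ g : (Fin (m ^ 2) → Bool) → ℕ,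
        (∀ x, g x ≤ m) ∧
        (∀ x (j : Fin (m ^ 2)),
          |(g (Function.update x j (!x j)) : ℤ) - (g x : ℤ)| ≤ 1) ∧
        (∀ y : ℕ, y ≤ m →
          ((Finset.univ.filter fun x : Fin (m ^ 2) → Bool => g x = y).card : ℝ)
              / 2 ^ (m ^ 2) ≤ c / m) := by
  classical
  refine ⟨6, by norm_num, ?_⟩
  intro m hm
  refine ⟨fun x => saw m ((univ.filter fun i => x i = true).card), ?_, ?_, ?_⟩
  · intro x
    exact saw_le m _ hm
  · -- Lipschitz
    intro x j
    cases hx : x j with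
    | true =>
      simp only [Bool.not_true]
      have hF : (univ.filter fun i => (Function.update x j false) i = true)
          = (univ.filter fun i => x i = true).erase j := by
        ext i
        simp only [mem_erase, mem_filter, mem_univ, true_and, Function.update_apply]
        by_cases hij : i = j <;> simp [hij, hx]
      have hjF : j ∈ univ.filter fun i => x i = true := by simp [hx]
      set S := (univ.filter fun i => x i = true).card with hS
      have hpos : 1 ≤ S := Finset.card_pos.mpr ⟨j, hjF⟩
      have hcard : (univ.filter fun i => (Function.update x j false) i = true).card
          = S - 1 := by rw [hF, Finset.card_erase_of_mem hjF]
      have h := saw_step m (S-1) hm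
      have hSS : S - 1 + 1 = S := by omega
      rw [hSS] at h
      simp only [hcard]
      rw [abs_le]
      constructor <;> push_cast <;> omega
    | false =>
      simp only [Bool.not_false]
      have hF : (univ.filter fun i => (Function.update x j true) i = true)
          = insert j (univ.filter fun i => x i = true) := by
        ext i
        simp only [mem_insert, mem_filter, mem_univ, true_and, Function.update_apply]
        by_cases hij : i = j <;> simp [hij, hx]
      have hjF : j ∉ univ.filter fun i => x i = true := by simp [hx]
      set S := (univ.filter fun i => x i = true).card with hS
      have hcard : (univ.filter fun i => (Function.update x j true) i = true).card
          = S + 1 := by rw [hF, Finset.card_insert_of_notMem hjF]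
      have h := saw_step m S hm
      simp only [hcard]
      rw [abs_le]
      constructor <;> push_cast <;> omega
  · -- measure bound
    intro y hy
    have hsub : (range (m^2+1)).filter (fun j => saw m j = y) ⊆
        (range (m^2+1)).filter (fun j => j % (2*m) = y)
          ∪ (range (m^2+1)).filter (fun j => j % (2*m) = 2*m - y) := by
      intro j hj
      simp only [mem_filter, mem_union, mem_range] at hj ⊢
      have hlt : j % (2*m) < 2*m := Nat.mod_lt _ (by omega)
      unfold saw at hj
      omega
    have hsum : ∑ j ∈ (range (m^2+1)).filter (fun j => saw m j = y), (m^2).choose j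
        ≤ (∑ j ∈ (range (m^2+1)).filter (fun j => j % (2*m) = y), (m^2).choose j)
          + ∑ j ∈ (range (m^2+1)).filter (fun j => j % (2*m) = 2*m - y), (m^2).choose j := by
      calc ∑ j ∈ (range (m^2+1)).filter (fun j => saw m j = y), (m^2).choose j
          ≤ ∑ j ∈ ((range (m^2+1)).filter (fun j => j % (2*m) = y)
              ∪ (range (m^2+1)).filter (fun j => j % (2*m) = 2*m - y)), (m^2).choose j :=
            Finset.sum_le_sum_of_subset hsub
        _ ≤ _ := by
            have := Finset.sum_union_inter
              (s₁ := (range (m^2+1)).filter (fun j => j % (2*m) = y))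
              (s₂ := (range (m^2+1)).filter (fun j => j % (2*m) = 2*m - y))
              (f := fun j => (m^2).choose j)
            omega
    have hcount : (univ.filter fun x : Fin (m^2) → Bool =>
          saw m ((univ.filter fun i => x i = true).card) = y).card
        = ∑ j ∈ (range (m^2+1)).filter (fun j => saw m j = y), (m^2).choose j :=
      card_level (m^2) (fun j => saw m j = y)
    have K1 := key (m^2) (2*m) y (by clear hcount; omega)
    have K2 := key (m^2) (2*m) (2*m - y) (by clear hcount; omega)
    have mm := m_mid m
    have hL2 : (univ.filter fun x : Fin (m^2) → Bool =>
          saw m ((univ.filter fun i => x i = true).card) = y).card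
        ≤ (∑ j ∈ (range (m^2+1)).filter (fun j => j % (2*m) = y), (m^2).choose j)
          + ∑ j ∈ (range (m^2+1)).filter (fun j => j % (2*m) = 2*m - y), (m^2).choose j :=
      le_trans (le_of_eq hcount) hsum
    have hS1 : 2 * (m * ∑ j ∈ (range (m^2+1)).filter (fun j => j % (2*m) = y), (m^2).choose j)
        ≤ 6 * 2^(m^2) := by linarith [K1, mm]
    have hS2 : 2 * (m * ∑ j ∈ (range (m^2+1)).filter (fun j => j % (2*m) = 2*m - y), (m^2).choose j)
        ≤ 6 * 2^(m^2) := by linarith [K2, mm]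
    have hml : m * (univ.filter fun x : Fin (m^2) → Bool =>
          saw m ((univ.filter fun i => x i = true).card) = y).card
        ≤ (m * ∑ j ∈ (range (m^2+1)).filter (fun j => j % (2*m) = y), (m^2).choose j)
          + m * ∑ j ∈ (range (m^2+1)).filter (fun j => j % (2*m) = 2*m - y), (m^2).choose j := by
      calc m * (univ.filter fun x : Fin (m^2) → Bool =>
            saw m ((univ.filter fun i => x i = true).card) = y).card
          ≤ m * ((∑ j ∈ (range (m^2+1)).filter (fun j => j % (2*m) = y), (m^2).choose j)
            + ∑ j ∈ (range (m^2+1)).filter (fun j => j % (2*m) = 2*m - y), (m^2).choose j) :=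
            Nat.mul_le_mul_left m hL2
        _ = _ := Nat.mul_add m _ _
    have hnat : m * (univ.filter fun x : Fin (m^2) → Bool =>
          saw m ((univ.filter fun i => x i = true).card) = y).card ≤ 6 * 2^(m^2) := by
      linarith [hS1, hS2, hml]
    rw [div_le_div_iff₀ (by positivity) (by exact_mod_cast hm)]
    calc ((univ.filter fun x : Fin (m^2) → Bool =>
            saw m ((univ.filter fun i => x i = true).card) = y).card : ℝ) * m
        = ((m * (univ.filter fun x : Fin (m^2) → Bool =>
            saw m ((univ.filter fun i => x i = true).card) = y).card : ℕ) : ℝ) := by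
          push_cast; ring
      _ ≤ ((6 * 2^(m^2) : ℕ) : ℝ) := by exact_mod_cast hnat
      _ = 6 * 2^(m^2) := by push_cast; ring
end

section
/- With k and g as above (g(x)=k(‖x‖_1) on {0,1}^{m^2}), there is a universal constant c>0 such that for every y ∈ {0,1,...,m}, P[g(x)=y] ≤ c/m under the uniform measure on {0,1}^{m^2}. -/
open Finset


lemma choose_mono_left {n i j : ℕ} (hij : i ≤ j) (hj : 2 * j ≤ n + 1) :
    n.choose i ≤ n.choose j := by
  induction j with
  | zero => simp [Nat.le_zero.mp hij]
  | succ j ih =>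
    rcases Nat.eq_or_lt_of_le hij with rfl | h
    · exact le_refl _
    · have h1 : n.choose i ≤ n.choose j := ih (by omega) (by omega)
      refine h1.trans ?_
      have key := Nat.choose_succ_right_eq n j
      have hle : j + 1 ≤ n - j := by omega
      have := Nat.mul_le_mul_left (n.choose j) hle
      nlinarith [Nat.choose_pos (show j + 1 ≤ n by omega)]

lemma choose_anti_right {n i j : ℕ} (hij : i ≤ j) (hi : n ≤ 2 * i + 1) (hj : j ≤ n) :
    n.choose j ≤ n.choose i := by
  have h1 : n.choose j = n.choose (n - j) := (Nat.choose_symm hj).symm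
  have h2 : n.choose i = n.choose (n - i) := (Nat.choose_symm (hij.trans hj)).symm
  rw [h1, h2]
  exact choose_mono_left (by omega) (by omega)

lemma mod_eq_spacing {d a b : ℕ} (h : a % d = b % d) (hab : a < b) : a + d ≤ b := by
  have hdvd : d ∣ b - a := (Nat.modEq_iff_dvd' hab.le).mp h
  have : d ≤ b - a := Nat.le_of_dvd (by omega) hdvd
  omega

lemma sumA (n d r : ℕ) (hd : 1 ≤ d) (A : Finset ℕ)
    (hmod : ∀ j ∈ A, j % d = r) (hup : ∀ j ∈ A, 2 * (j + d) ≤ n + 1) :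
    d * ∑ j ∈ A, n.choose j ≤ 2 ^ n := by
  have step1 : d * ∑ j ∈ A, n.choose j
      ≤ ∑ j ∈ A, ∑ s ∈ Finset.Ico 1 (d+1), n.choose (j + s) := by
    rw [Finset.mul_sum]
    refine Finset.sum_le_sum fun j hj => ?_
    have hjA := hup j hj
    calc d * n.choose j = ∑ _s ∈ Finset.Ico 1 (d+1), n.choose j := by
          rw [Finset.sum_const, Nat.card_Ico, smul_eq_mul]; congr 1
      _ ≤ ∑ s ∈ Finset.Ico 1 (d+1), n.choose (j + s) := by
          refine Finset.sum_le_sum fun s hs => ?_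
          have := Finset.mem_Ico.mp hs
          exact choose_mono_left (by omega) (by omega)
  have inj : ∀ p ∈ A ×ˢ Finset.Ico 1 (d+1), ∀ q ∈ A ×ˢ Finset.Ico 1 (d+1),
      p.1 + p.2 = q.1 + q.2 → p = q := by
    rintro ⟨j, s⟩ hp ⟨j', s'⟩ hq heq
    simp only [Finset.mem_product, Finset.mem_Ico] at hp hq
    have hm := hmod j hp.1; have hm' := hmod j' hq.1
    have hjj' : j = j' := by
      rcases Nat.lt_trichotomy j j' with h | h | h
      · have := mod_eq_spacing (hm.trans hm'.symm) h; omega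
      · exact h
      · have := mod_eq_spacing (hm'.trans hm.symm) h; omega
    simp only [hjj'] at heq
    have hss : s = s' := by omega
    simp [hjj', hss]
  have step3 : ∑ j ∈ A, ∑ s ∈ Finset.Ico 1 (d+1), n.choose (j + s)
      = ∑ i ∈ (A ×ˢ Finset.Ico 1 (d+1)).image (fun p => p.1 + p.2), n.choose i := by
    rw [Finset.sum_image inj, Finset.sum_product]
  have hsub : (A ×ˢ Finset.Ico 1 (d+1)).image (fun p => p.1 + p.2) ⊆ Finset.range (n+1) := by
    intro i hi
    obtain ⟨⟨j, s⟩, hp, rfl⟩ := Finset.mem_image.mp hi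
    simp only [Finset.mem_product, Finset.mem_Ico] at hp
    have := hup j hp.1
    simp only [Finset.mem_range]
    omega
  calc d * ∑ j ∈ A, n.choose j
      ≤ ∑ i ∈ (A ×ˢ Finset.Ico 1 (d+1)).image (fun p => p.1 + p.2), n.choose i :=
        step1.trans step3.le
    _ ≤ ∑ i ∈ Finset.range (n+1), n.choose i := Finset.sum_le_sum_of_subset hsub
    _ = 2 ^ n := Nat.sum_range_choose n

lemma sumB (n d r : ℕ) (hd : 1 ≤ d) (B : Finset ℕ)
    (hmod : ∀ j ∈ B, j % d = r)
    (hdown : ∀ j ∈ B, j ≤ n ∧ d ≤ j ∧ n ≤ 2 * (j - d) + 1) :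
    d * ∑ j ∈ B, n.choose j ≤ 2 ^ n := by
  have step1 : d * ∑ j ∈ B, n.choose j
      ≤ ∑ j ∈ B, ∑ s ∈ Finset.Ico 1 (d+1), n.choose (j - s) := by
    rw [Finset.mul_sum]
    refine Finset.sum_le_sum fun j hj => ?_
    obtain ⟨hjn, hdj, hnd⟩ := hdown j hj
    calc d * n.choose j = ∑ _s ∈ Finset.Ico 1 (d+1), n.choose j := by
          rw [Finset.sum_const, Nat.card_Ico, smul_eq_mul]; congr 1
      _ ≤ ∑ s ∈ Finset.Ico 1 (d+1), n.choose (j - s) := by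
          refine Finset.sum_le_sum fun s hs => ?_
          have := Finset.mem_Ico.mp hs
          exact choose_anti_right (by omega) (by omega) hjn
  have inj : ∀ p ∈ B ×ˢ Finset.Ico 1 (d+1), ∀ q ∈ B ×ˢ Finset.Ico 1 (d+1),
      p.1 - p.2 = q.1 - q.2 → p = q := by
    rintro ⟨j, s⟩ hp ⟨j', s'⟩ hq heq
    simp only [Finset.mem_product, Finset.mem_Ico] at hp hq
    have hm := hmod j hp.1; have hm' := hmod j' hq.1
    obtain ⟨_, hdj, _⟩ := hdown j hp.1
    obtain ⟨_, hdj', _⟩ := hdown j' hq.1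
    have hjj' : j = j' := by
      rcases Nat.lt_trichotomy j j' with h | h | h
      · have := mod_eq_spacing (hm.trans hm'.symm) h; omega
      · exact h
      · have := mod_eq_spacing (hm'.trans hm.symm) h; omega
    simp only [hjj'] at heq
    have hss : s = s' := by omega
    simp [hjj', hss]
  have step3 : ∑ j ∈ B, ∑ s ∈ Finset.Ico 1 (d+1), n.choose (j - s)
      = ∑ i ∈ (B ×ˢ Finset.Ico 1 (d+1)).image (fun p => p.1 - p.2), n.choose i := by
    rw [Finset.sum_image inj, Finset.sum_product]
  have hsub : (B ×ˢ Finset.Ico 1 (d+1)).image (fun p => p.1 - p.2) ⊆ Finset.range (n+1) := by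
    intro i hi
    obtain ⟨⟨j, s⟩, hp, rfl⟩ := Finset.mem_image.mp hi
    simp only [Finset.mem_product, Finset.mem_Ico] at hp
    have := (hdown j hp.1).1
    simp only [Finset.mem_range]
    omega
  calc d * ∑ j ∈ B, n.choose j
      ≤ ∑ i ∈ (B ×ˢ Finset.Ico 1 (d+1)).image (fun p => p.1 - p.2), n.choose i :=
        step1.trans step3.le
    _ ≤ ∑ i ∈ Finset.range (n+1), n.choose i := Finset.sum_le_sum_of_subset hsub
    _ = 2 ^ n := Nat.sum_range_choose n
lemma class_sum (n d r : ℕ) (hd : 1 ≤ d) :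
    d * ∑ j ∈ (Finset.range (n+1)).filter (fun j => j % d = r), n.choose j
      ≤ 2 * 2 ^ n + 2 * (d * n.choose (n / 2)) := by
  set T := (Finset.range (n+1)).filter (fun j => j % d = r) with hT
  have hmodT : ∀ j ∈ T, j % d = r := fun j hj => (Finset.mem_filter.mp hj).2
  have hranT : ∀ j ∈ T, j ≤ n := fun j hj => by
    have := Finset.mem_range.mp (Finset.mem_filter.mp hj).1; omega
  set pA : ℕ → Prop := fun j => 2 * (j + d) ≤ n + 1 with hpA
  set pB : ℕ → Prop := fun j => d ≤ j ∧ n ≤ 2 * (j - d) + 1 with hpB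
  have split1 : ∑ j ∈ T, n.choose j
      = ∑ j ∈ T.filter pA, n.choose j + ∑ j ∈ T.filter (fun j => ¬ pA j), n.choose j :=
    (Finset.sum_filter_add_sum_filter_not T pA _).symm
  have split2 : ∑ j ∈ T.filter (fun j => ¬ pA j), n.choose j
      = ∑ j ∈ (T.filter (fun j => ¬ pA j)).filter pB, n.choose j
        + ∑ j ∈ (T.filter (fun j => ¬ pA j)).filter (fun j => ¬ pB j), n.choose j :=
    (Finset.sum_filter_add_sum_filter_not _ pB _).symm
  set A := T.filter pA with hA
  set B := (T.filter (fun j => ¬ pA j)).filter pB with hB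
  set M := (T.filter (fun j => ¬ pA j)).filter (fun j => ¬ pB j) with hM
  have boundA : d * ∑ j ∈ A, n.choose j ≤ 2 ^ n := by
    refine sumA n d r hd A (fun j hj => hmodT j (Finset.mem_filter.mp hj).1) ?_
    exact fun j hj => (Finset.mem_filter.mp hj).2
  have boundB : d * ∑ j ∈ B, n.choose j ≤ 2 ^ n := by
    refine sumB n d r hd B ?_ ?_
    · exact fun j hj => hmodT j (Finset.mem_filter.mp (Finset.mem_filter.mp hj).1).1
    · intro j hj
      obtain ⟨hj1, hj2⟩ := Finset.mem_filter.mp hj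
      exact ⟨hranT j (Finset.mem_filter.mp hj1).1, hj2.1, hj2.2⟩
  -- every element of M lies in a narrow band
  have hMband : ∀ j ∈ M, j % d = r ∧ n + 2 ≤ 2 * j + 2 * d ∧ 2 * j ≤ n + 2 * d - 2 := by
    intro j hj
    obtain ⟨hj1, hnB⟩ := Finset.mem_filter.mp hj
    obtain ⟨hj0, hnA⟩ := Finset.mem_filter.mp hj1
    refine ⟨hmodT j hj0, ?_, ?_⟩
    · simp only [hpA] at hnA; omega
    · simp only [hpB, not_and, not_le] at hnB
      simp only [hpA] at hnA
      by_cases hdj : d ≤ j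
      · have := hnB hdj; omega
      · omega
  have hMcard : M.card ≤ 2 := by
    by_contra hc
    push_neg at hc
    obtain ⟨a, b, c, ha, hb, hcM, hab, hac, hbc⟩ := Finset.two_lt_card_iff.mp hc
    have key : ∀ x y z, x ∈ M → y ∈ M → z ∈ M → x < y → y < z → False := by
      intro x y z hx hy hz hxy hyz
      obtain ⟨hmx, hx1, hx2⟩ := hMband x hx
      obtain ⟨hmy, hy1, hy2⟩ := hMband y hy
      obtain ⟨hmz, hz1, hz2⟩ := hMband z hz
      have s1 := mod_eq_spacing (hmx.trans hmy.symm) hxy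
      have s2 := mod_eq_spacing (hmy.trans hmz.symm) hyz
      omega
    rcases Nat.lt_trichotomy a b with h1 | h1 | h1
    · rcases Nat.lt_trichotomy b c with h2 | h2 | h2
      · exact key a b c ha hb hcM h1 h2
      · exact hbc h2
      · rcases Nat.lt_trichotomy a c with h3 | h3 | h3
        · exact key a c b ha hcM hb h3 h2
        · exact hac h3
        · exact key c a b hcM ha hb h3 h1
    · exact hab h1
    · rcases Nat.lt_trichotomy a c with h2 | h2 | h2
      · exact key b a c hb ha hcM h1 h2
      · exact hac h2
      · rcases Nat.lt_trichotomy b c with h3 | h3 | h3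
        · exact key b c a hb hcM ha h3 h2
        · exact hbc h3
        · exact key c b a hcM hb ha h3 h1
  have boundM : ∑ j ∈ M, n.choose j ≤ 2 * n.choose (n / 2) := by
    calc ∑ j ∈ M, n.choose j ≤ M.card • n.choose (n / 2) :=
          Finset.sum_le_card_nsmul M _ _ (fun j _ => Nat.choose_le_middle j n)
      _ = M.card * n.choose (n / 2) := smul_eq_mul _ _
      _ ≤ 2 * n.choose (n / 2) := Nat.mul_le_mul_right _ hMcard
  calc d * ∑ j ∈ T, n.choose j
      = d * ∑ j ∈ A, n.choose j + d * ∑ j ∈ B, n.choose j + d * ∑ j ∈ M, n.choose j := by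
        rw [split1, split2]; ring
    _ ≤ 2 ^ n + 2 ^ n + d * (2 * n.choose (n / 2)) := by
        gcongr
    _ = 2 * 2 ^ n + 2 * (d * n.choose (n / 2)) := by ring

lemma centralBinom_sq_bound (k : ℕ) : (2 * k + 1) * (Nat.centralBinom k) ^ 2 ≤ 16 ^ k := by
  induction k with
  | zero => norm_num [Nat.centralBinom]
  | succ k ih =>
    have key := Nat.succ_mul_centralBinom_succ k
    have hpos : 0 < (k + 1) ^ 2 := by positivity
    have h1 : (k+1)^2 * ((2 * (k+1) + 1) * (Nat.centralBinom (k+1))^2)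
        = (2*k+3) * ((k+1) * Nat.centralBinom (k+1))^2 := by ring
    rw [key] at h1
    have h2 : (2*k+3) * (2*(2*k+1) * Nat.centralBinom k)^2
        ≤ (k+1)^2 * (16 * ((2*k+1) * (Nat.centralBinom k)^2)) := by
      nlinarith [sq_nonneg (Nat.centralBinom k)]
    have h3 : (k+1)^2 * (16 * ((2*k+1) * (Nat.centralBinom k)^2)) ≤ (k+1)^2 * (16 * 16^k) :=
      Nat.mul_le_mul_left _ (Nat.mul_le_mul_left _ ih)
    have h5 := (h1.trans_le h2).trans h3
    have h4 : (2 * (k+1) + 1) * (Nat.centralBinom (k+1))^2 ≤ 16 * 16^k :=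
      Nat.le_of_mul_le_mul_left (by linarith) hpos
    calc (2 * (k+1) + 1) * (Nat.centralBinom (k+1))^2 ≤ 16 * 16^k := h4
      _ = 16 ^ (k+1) := by ring

lemma middle_choose_bound (m : ℕ) (hm : 0 < m) :
    m * (m ^ 2).choose (m ^ 2 / 2) ≤ 2 ^ (m ^ 2) := by
  set n := m ^ 2 with hn
  rcases Nat.even_or_odd n with ⟨k, hk⟩ | ⟨k, hk⟩
  · -- n = 2k
    have hC : n.choose (n / 2) = Nat.centralBinom k := by
      rw [Nat.centralBinom]; congr 1 <;> omega
    have hb := centralBinom_sq_bound k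
    have h16 : (16:ℕ) ^ k = (2 ^ n)^2 := by
      rw [show (16:ℕ) = 2^4 by norm_num, ← pow_mul, ← pow_mul]; congr 1; omega
    have hsq : (m * n.choose (n/2))^2 ≤ (2^n)^2 := by
      rw [hC]
      calc (m * Nat.centralBinom k)^2 = m^2 * (Nat.centralBinom k)^2 := by ring
        _ ≤ (2*k+1) * (Nat.centralBinom k)^2 := by
            apply Nat.mul_le_mul_right; omega
        _ ≤ 16 ^ k := hb
        _ = (2^n)^2 := h16
    exact (Nat.pow_le_pow_iff_left (by norm_num)).mp hsq
  · -- n = 2k+1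
    have hC : n.choose (n / 2) ≤ 2 * Nat.centralBinom k := by
      have h2 : n / 2 = k := by omega
      rw [h2]
      rcases Nat.eq_zero_or_pos k with rfl | hk0
      · have : n = 1 := by omega
        rw [this]
        norm_num [Nat.centralBinom]
      · obtain ⟨j, rfl⟩ : ∃ j, k = j + 1 := ⟨k - 1, by omega⟩
        have hsplit : n.choose (j+1) = (2*(j+1)).choose j + (2*(j+1)).choose (j+1) := by
          rw [show n = (2*j+2) + 1 by omega, Nat.choose_succ_succ]
          congr 2 <;> omega
        rw [hsplit, Nat.centralBinom]
        have h6 := Nat.choose_le_middle j (2*(j+1))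
        have hmid : (2*(j+1))/2 = j + 1 := by omega
        rw [hmid] at h6
        omega
    have hb := centralBinom_sq_bound k
    have h16 : (16:ℕ) ^ k = (2 ^ (2*k))^2 := by
      rw [show (16:ℕ) = 2^4 by norm_num, ← pow_mul, ← pow_mul]; congr 1; omega
    have hsq : (m * Nat.centralBinom k)^2 ≤ (2^(2*k))^2 := by
      calc (m * Nat.centralBinom k)^2 = m^2 * (Nat.centralBinom k)^2 := by ring
        _ ≤ (2*k+1) * (Nat.centralBinom k)^2 := by apply Nat.mul_le_mul_right; omega
        _ ≤ 16 ^ k := hb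
        _ = (2^(2*k))^2 := h16
    have h5 : m * Nat.centralBinom k ≤ 2^(2*k) :=
      (Nat.pow_le_pow_iff_left (by norm_num)).mp hsq
    calc m * n.choose (n/2) ≤ m * (2 * Nat.centralBinom k) := Nat.mul_le_mul_left _ hC
      _ = 2 * (m * Nat.centralBinom k) := by ring
      _ ≤ 2 * 2^(2*k) := Nat.mul_le_mul_left _ h5
      _ = 2 ^ n := by rw [hk]; ring

lemma k_formula (m : ℕ) (hm : 0 < m) (k : ℕ → ℤ) (hk0 : k 0 = 0)
    (hk : ∀ j : ℕ, k (j + 1) = if j % (2 * m) < m then k j + 1 else k j - 1) :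
    ∀ j : ℕ, k j = if j % (2 * m) ≤ m then ((j % (2 * m) : ℕ) : ℤ)
      else (2 * m : ℤ) - ((j % (2 * m) : ℕ) : ℤ) := by
  intro j
  induction j with
  | zero =>
    rw [if_pos (by simp)]
    simpa using hk0
  | succ j ih =>
    have hlt : j % (2 * m) < 2 * m := Nat.mod_lt _ (by omega)
    set t := j % (2 * m) with ht
    have hmod : (j + 1) % (2 * m) = (t + 1) % (2 * m) := by
      conv_lhs => rw [← Nat.div_add_mod j (2 * m), ← ht, Nat.add_assoc]
      rw [Nat.mul_add_mod]
    have hsucc : (j + 1) % (2 * m) = if t + 1 < 2 * m then t + 1 else 0 := by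
      rw [hmod]
      split_ifs with h
      · exact Nat.mod_eq_of_lt h
      · have : t + 1 = 2 * m := by omega
        rw [this, Nat.mod_self]
    rw [hk j, hsucc, ← ht]
    split_ifs at ih ⊢ <;> push_cast at ih ⊢ <;> omega

lemma weight_card_le (N j : ℕ) :
    (Finset.univ.filter fun x : Fin N → Bool =>
      (Finset.univ.filter fun i => x i = true).card = j).card ≤ N.choose j := by
  have := Finset.card_le_card_of_injOn
    (f := fun x : Fin N → Bool => Finset.univ.filter fun i => x i = true)
    (s := Finset.univ.filter fun x : Fin N → Bool =>
      (Finset.univ.filter fun i => x i = true).card = j)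
    (t := Finset.powersetCard j (Finset.univ : Finset (Fin N)))
    (by
      intro x hx
      rw [Finset.mem_coe, Finset.mem_powersetCard]
      exact ⟨Finset.subset_univ _, (Finset.mem_filter.mp (Finset.mem_coe.mp hx)).2⟩)
    (by
      intro x _ x' _ hxx'
      have hxx2 : (Finset.univ.filter fun i => x i = true) = (Finset.univ.filter fun i => x' i = true) := hxx'
      funext i
      have h1 : (x i = true) ↔ (x' i = true) := by
        constructor <;> intro h
        · have : i ∈ Finset.univ.filter fun i => x' i = true := by
            rw [← hxx2]; simp [h]
          simpa using this
        · have : i ∈ Finset.univ.filter fun i => x i = true := by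
            rw [hxx2]; simp [h]
          simpa using this
      cases hxi : x i <;> cases hxi' : x' i <;> simp_all)
  rwa [Finset.card_powersetCard, Finset.card_univ, Fintype.card_fin] at this

/-- With `k` as in Lemma (k(0)=0, going up for `j mod 2m < m`, down
otherwise) and `g x = k ‖x‖₁` on `{0,1}^{m²}`, there is a universal constant `c > 0`
such that every level set of `g` has uniform probability at most `c/m`. -/
theorem stmt2 :
    ∃ c : ℝ, 0 < c ∧ ∀ m : ℕ, 0 < m → ∀ k : ℕ → ℤ,
      k 0 = 0 →
      (∀ j : ℕ, k (j + 1) = if j % (2 * m) < m then k j + 1 else k j - 1) →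
      ∀ y : ℤ, 0 ≤ y → y ≤ (m : ℤ) →
        ((Finset.univ.filter fun x : Fin (m ^ 2) → Bool =>
            k ((Finset.univ.filter fun i => x i = true).card) = y).card : ℝ)
            / 2 ^ (m ^ 2) ≤ c / m := by
  refine ⟨6, by norm_num, ?_⟩
  intro m hm k hk0 hk y hy0 hym
  set n := m ^ 2 with hn
  set d := 2 * m with hd
  set yn := y.toNat with hyn
  have hkf := k_formula m hm k hk0 hk
  have hmem : ∀ j : ℕ, k j = y → j % d = yn ∨ j % d = d - yn := by
    intro j hj
    rw [hd]
    have hlt : j % (2 * m) < 2 * m := Nat.mod_lt _ (by omega)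
    rw [hkf j] at hj
    split_ifs at hj with h
    · left; omega
    · right; omega
  set X := (Finset.univ.filter fun x : Fin (m ^ 2) → Bool =>
      k ((Finset.univ.filter fun i => x i = true).card) = y) with hX
  set J := (Finset.range (n + 1)).filter (fun j => k j = y) with hJ
  set w : (Fin (m ^ 2) → Bool) → ℕ := fun x => (Finset.univ.filter fun i => x i = true).card
    with hw
  have hwle : ∀ x : Fin (m ^ 2) → Bool, w x ≤ m ^ 2 := by
    intro x
    simp only [hw]
    have := Finset.card_filter_le (Finset.univ : Finset (Fin (m ^ 2)))
      (fun i => x i = true)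
    simpa using this
  have hmap : ∀ x ∈ X, w x ∈ J := by
    intro x hx
    rw [Finset.mem_filter]
    constructor
    · rw [Finset.mem_range]
      have := hwle x
      omega
    · exact (Finset.mem_filter.mp hx).2
  have hcardX : X.card ≤ ∑ j ∈ J, n.choose j := by
    rw [Finset.card_eq_sum_card_fiberwise hmap]
    refine Finset.sum_le_sum fun j _ => ?_
    calc (X.filter fun x => w x = j).card
        ≤ (Finset.univ.filter fun x : Fin (m ^ 2) → Bool => w x = j).card := by
          apply Finset.card_le_card
          exact Finset.filter_subset_filter _ (Finset.filter_subset _ _)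
      _ ≤ n.choose j := by
          rw [hn]
          simpa only [hw] using weight_card_le (m ^ 2) j
  set T1 := (Finset.range (n + 1)).filter (fun j => j % d = yn) with hT1
  set T2 := (Finset.range (n + 1)).filter (fun j => j % d = d - yn) with hT2
  have hJsub : J ⊆ T1 ∪ T2 := by
    intro j hj
    obtain ⟨hj1, hj2⟩ := Finset.mem_filter.mp hj
    rcases hmem j hj2 with h | h
    · exact Finset.mem_union_left _ (Finset.mem_filter.mpr ⟨hj1, h⟩)
    · exact Finset.mem_union_right _ (Finset.mem_filter.mpr ⟨hj1, h⟩)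
  have hsumJ : ∑ j ∈ J, n.choose j ≤ ∑ j ∈ T1, n.choose j + ∑ j ∈ T2, n.choose j := by
    calc ∑ j ∈ J, n.choose j ≤ ∑ j ∈ T1 ∪ T2, n.choose j :=
          Finset.sum_le_sum_of_subset hJsub
      _ ≤ ∑ j ∈ T1, n.choose j + ∑ j ∈ T2, n.choose j := by
          rw [← Finset.union_sdiff_self_eq_union, Finset.sum_union Finset.sdiff_disjoint.symm]
          exact Nat.add_le_add_left (Finset.sum_le_sum_of_subset (Finset.sdiff_subset)) _
  have c1 := class_sum n d yn (by omega)
  have c2 := class_sum n d (d - yn) (by omega)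
  rw [← hT1] at c1
  rw [← hT2] at c2
  have cm := middle_choose_bound m hm
  rw [← hn] at cm
  have hnat : m * X.card ≤ 6 * 2 ^ n := by
    have h1 : d * X.card ≤ d * (∑ j ∈ T1, n.choose j + ∑ j ∈ T2, n.choose j) :=
      Nat.mul_le_mul_left _ (hcardX.trans hsumJ)
    have h2 : d * (∑ j ∈ T1, n.choose j + ∑ j ∈ T2, n.choose j)
        = d * ∑ j ∈ T1, n.choose j + d * ∑ j ∈ T2, n.choose j := by ring
    have h3 : d * (n.choose (n / 2)) = 2 * (m * n.choose (n / 2)) := by rw [hd]; ring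
    have h4 : d * X.card ≤ 4 * 2 ^ n + 4 * (2 * (m * n.choose (n / 2))) := by
      rw [← h3]; omega
    have h5 : d * X.card ≤ 12 * 2 ^ n := by
      have : 2 * (m * n.choose (n / 2)) ≤ 2 * 2 ^ n := Nat.mul_le_mul_left _ cm
      omega
    have h0 : d * X.card = 2 * (m * X.card) := by rw [hd]; ring
    omega
  have hm' : (0 : ℝ) < (m : ℝ) := by exact_mod_cast hm
  have hpow : (0 : ℝ) < 2 ^ (m ^ 2) := by positivity
  rw [div_le_div_iff₀ hpow hm']
  have : ((X.card : ℝ) * m) = ((m * X.card : ℕ) : ℝ) := by push_cast; ring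
  rw [this]
  have h6 : ((m * X.card : ℕ) : ℝ) ≤ ((6 * 2 ^ n : ℕ) : ℝ) := by exact_mod_cast hnat
  calc ((m * X.card : ℕ) : ℝ) ≤ ((6 * 2 ^ n : ℕ) : ℝ) := h6
    _ = 6 * 2 ^ (m ^ 2) := by push_cast [hn]; ring
end

section
/- For f: {0,1}^J → ℝ with J finite, Var(f) ≤ 3 Σ_{j∈J} ∫_0^1 ‖f_j‖_{1+p^2}^2 dp, where f_j := (f - f∘σ_j)/2 and ‖·‖_q denotes the L^q norm with respect to the uniform measure. -/
set_option linter.unusedSectionVars false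
set_option linter.unnecessarySeqFocus false
set_option maxHeartbeats 1000000


open Finset

/-- Expectation with respect to the uniform measure on `{0,1}^J`. -/
noncomputable def hcExp {J : Type*} [Fintype J] [DecidableEq J] (f : (J → Bool) → ℝ) : ℝ :=
  (∑ x : J → Bool, f x) / 2 ^ Fintype.card J

/-- The Walsh function `u_S(ω) = (-1)^{Σ_{s∈S} ω_s}`. -/
def walsh {J : Type*} (S : Finset J) (x : J → Bool) : ℝ :=
  (-1 : ℝ) ^ (S.filter fun s => x s = true).card

/-- The Fourier-Walsh coefficient `\hat f(S) = E[f ⬝ u_S]`. -/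
noncomputable def fcoef {J : Type*} [Fintype J] [DecidableEq J] (f : (J → Bool) → ℝ) (S : Finset J) : ℝ :=
  hcExp fun x => f x * walsh S x

/-- The discrete derivative `ρ_j f = (f - f∘σ_j)/2`, where `σ_j` flips coordinate `j`. -/
noncomputable def rhoD {J : Type*} [DecidableEq J] (j : J) (f : (J → Bool) → ℝ) :
    (J → Bool) → ℝ :=
  fun x => (f x - f (Function.update x j (!x j))) / 2

/-- The `L^q` norm with respect to the uniform measure on `{0,1}^J`. -/
noncomputable def lqNorm {J : Type*} [Fintype J] [DecidableEq J] (q : ℝ)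
    (f : (J → Bool) → ℝ) : ℝ :=
  (hcExp fun x => |f x| ^ q) ^ (1 / q)

/-- The variance with respect to the uniform measure on `{0,1}^J`. -/
noncomputable def hcVar {J : Type*} [Fintype J] [DecidableEq J]
    (f : (J → Bool) → ℝ) : ℝ :=
  hcExp fun x => (f x - hcExp f) ^ 2

section CubeBasics
variable {J : Type*} [Fintype J] [DecidableEq J]

lemma hcExp_add (f g : (J → Bool) → ℝ) : hcExp (fun x => f x + g x) = hcExp f + hcExp g := by
  simp [hcExp, Finset.sum_add_distrib, add_div]

lemma hcExp_sub (f g : (J → Bool) → ℝ) : hcExp (fun x => f x - g x) = hcExp f - hcExp g := by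
  simp [hcExp, Finset.sum_sub_distrib, sub_div]

lemma hcExp_const_mul (c : ℝ) (f : (J → Bool) → ℝ) :
    hcExp (fun x => c * f x) = c * hcExp f := by
  simp [hcExp, ← Finset.mul_sum, mul_div_assoc]

lemma hcExp_const (c : ℝ) : hcExp (fun _ : J → Bool => c) = c := by
  rw [hcExp, Finset.sum_const, Finset.card_univ, Fintype.card_fun, Fintype.card_bool,
    nsmul_eq_mul]
  push_cast
  rw [mul_comm, mul_div_assoc, div_self (by positivity), mul_one]

lemma hcExp_mono {f g : (J → Bool) → ℝ} (h : ∀ x, f x ≤ g x) : hcExp f ≤ hcExp g := by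
  have hc : (0:ℝ) < 2 ^ Fintype.card J := by positivity
  exact div_le_div_of_nonneg_right (Finset.sum_le_sum fun x _ => h x) hc.le

lemma hcExp_nonneg {f : (J → Bool) → ℝ} (h : ∀ x, 0 ≤ f x) : 0 ≤ hcExp f := by
  have := hcExp_mono (f := fun _ : J → Bool => (0:ℝ)) (g := f) h
  rwa [hcExp_const] at this

lemma hcExp_sum {ι : Type*} (s : Finset ι) (f : ι → (J → Bool) → ℝ) :
    hcExp (fun x => ∑ i ∈ s, f i x) = ∑ i ∈ s, hcExp (f i) := by
  simp only [hcExp]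
  rw [Finset.sum_comm, Finset.sum_div]

lemma walsh_eq_prod (S : Finset J) (x : J → Bool) :
    walsh S x = ∏ i ∈ S, (if x i then (-1:ℝ) else 1) := by
  rw [walsh, Finset.prod_ite, Finset.prod_const, Finset.prod_const_one, mul_one]

lemma walsh_eq_prod_univ (S : Finset J) (x : J → Bool) :
    walsh S x = ∏ i : J, (if i ∈ S then (if x i then (-1:ℝ) else 1) else 1) := by
  rw [walsh_eq_prod, Finset.prod_ite_mem, Finset.univ_inter]

lemma walsh_empty (x : J → Bool) : walsh (∅ : Finset J) x = 1 := by simp [walsh]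

lemma hcExp_walsh (S : Finset J) : hcExp (walsh S) = if S = ∅ then 1 else 0 := by
  have key : (∑ x : J → Bool, walsh S x)
      = ∏ i : J, ∑ b : Bool, (if i ∈ S then (if b then (-1:ℝ) else 1) else 1) := by
    rw [Finset.prod_univ_sum]
    rw [Fintype.piFinset_univ]
    exact Finset.sum_congr rfl fun x _ => walsh_eq_prod_univ S x
  have key2 : (∑ x : J → Bool, walsh S x) = ∏ i : J, (if i ∈ S then (0:ℝ) else 2) := by
    rw [key]
    exact Finset.prod_congr rfl fun i _ => by by_cases h : i ∈ S <;> simp [h]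
  by_cases hS : S = ∅
  · subst hS
    simp only [hcExp, key2, Finset.notMem_empty, if_false, if_pos rfl, Finset.prod_const,
      Finset.card_univ]
    exact div_self (by positivity)
  · simp only [hcExp, key2, if_neg hS]
    obtain ⟨j, hj⟩ := Finset.nonempty_iff_ne_empty.mpr hS
    rw [Finset.prod_eq_zero (Finset.mem_univ j) (by simp [hj])]
    simp

-- chunk 2
lemma walsh_mul (S T : Finset J) (x : J → Bool) :
    walsh S x * walsh T x = walsh (symmDiff S T) x := by
  simp only [walsh_eq_prod]
  set h : J → ℝ := fun i => if x i then (-1:ℝ) else 1 with hh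
  have hsq : ∀ t : Finset J, (∏ i ∈ t, h i) * (∏ i ∈ t, h i) = 1 := by
    intro t
    rw [← Finset.prod_mul_distrib]
    refine Finset.prod_eq_one fun i _ => ?_
    by_cases c : x i <;> simp [hh, c]
  have hS : (∏ i ∈ S, h i) = (∏ i ∈ S \ T, h i) * ∏ i ∈ S ∩ T, h i := by
    rw [← Finset.prod_union (Finset.disjoint_sdiff_inter S T), Finset.sdiff_union_inter]
  have hT : (∏ i ∈ T, h i) = (∏ i ∈ T \ S, h i) * ∏ i ∈ S ∩ T, h i := by
    rw [Finset.inter_comm, ← Finset.prod_union (Finset.disjoint_sdiff_inter T S),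
      Finset.sdiff_union_inter]
  have hST : (∏ i ∈ symmDiff S T, h i) = (∏ i ∈ S \ T, h i) * ∏ i ∈ T \ S, h i := by
    rw [symmDiff_def, Finset.sup_eq_union, Finset.prod_union (disjoint_sdiff_sdiff)]
  rw [hS, hT, hST]
  calc (∏ i ∈ S \ T, h i) * (∏ i ∈ S ∩ T, h i) * ((∏ i ∈ T \ S, h i) * ∏ i ∈ S ∩ T, h i)
      = ((∏ i ∈ S \ T, h i) * ∏ i ∈ T \ S, h i) * ((∏ i ∈ S ∩ T, h i) * ∏ i ∈ S ∩ T, h i) := by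
        ring
    _ = (∏ i ∈ S \ T, h i) * ∏ i ∈ T \ S, h i := by rw [hsq, mul_one]

lemma hcExp_walsh_mul (S T : Finset J) :
    hcExp (fun x => walsh S x * walsh T x) = if S = T then 1 else 0 := by
  have : (fun x : J → Bool => walsh S x * walsh T x) = walsh (symmDiff S T) := by
    funext x; exact walsh_mul S T x
  rw [this, hcExp_walsh]
  congr 1
  simp [symmDiff_eq_bot]

lemma sum_walsh_mul (x y : J → Bool) :
    ∑ S : Finset J, walsh S x * walsh S y
      = if x = y then (2:ℝ) ^ Fintype.card J else 0 := by
  have key : ∑ S : Finset J, walsh S x * walsh S y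
      = ∏ i : J, ((if x i then (-1:ℝ) else 1) * (if y i then (-1:ℝ) else 1) + 1) := by
    rw [Finset.prod_add]
    rw [← Finset.powerset_univ]
    refine Finset.sum_congr rfl fun S _ => ?_
    rw [Finset.prod_const_one, mul_one, walsh_eq_prod, walsh_eq_prod, ← Finset.prod_mul_distrib]
  rw [key]
  by_cases hxy : x = y
  · subst hxy
    rw [if_pos rfl]
    calc ∏ i : J, ((if x i then (-1:ℝ) else 1) * (if x i then (-1:ℝ) else 1) + 1)
        = ∏ i : J, (2:ℝ) := Finset.prod_congr rfl fun i _ => by by_cases c : x i <;> norm_num [c]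
      _ = (2:ℝ) ^ Fintype.card J := by rw [Finset.prod_const, Finset.card_univ]
  · rw [if_neg hxy]
    obtain ⟨i, hi⟩ : ∃ i, x i ≠ y i := by
      by_contra hc
      push_neg at hc
      exact hxy (funext hc)
    refine Finset.prod_eq_zero (Finset.mem_univ i) ?_
    rcases Bool.eq_false_or_eq_true (x i) with c1 | c1 <;>
      rcases Bool.eq_false_or_eq_true (y i) with c2 | c2 <;>
      simp_all
lemma fourier_inv (f : (J → Bool) → ℝ) (x : J → Bool) :
    ∑ S : Finset J, fcoef f S * walsh S x = f x := by
  have step1 : ∀ S : Finset J, fcoef f S * walsh S x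
      = hcExp (fun y => walsh S x * (f y * walsh S y)) := by
    intro S
    rw [hcExp_const_mul, fcoef, mul_comm]
  calc ∑ S : Finset J, fcoef f S * walsh S x
      = ∑ S : Finset J, hcExp (fun y => walsh S x * (f y * walsh S y)) := by
        exact Finset.sum_congr rfl fun S _ => step1 S
    _ = hcExp (fun y => ∑ S : Finset J, walsh S x * (f y * walsh S y)) := (hcExp_sum _ _).symm
    _ = hcExp (fun y => f y * if y = x then (2:ℝ) ^ Fintype.card J else 0) := by
        congr 1
        funext y
        rw [← sum_walsh_mul y x, Finset.mul_sum]
        exact Finset.sum_congr rfl fun S _ => by ring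
    _ = f x := by
        have hrw : (fun y => f y * if y = x then (2:ℝ) ^ Fintype.card J else 0)
            = fun y => if y = x then f y * (2:ℝ) ^ Fintype.card J else 0 := by
          funext y; split <;> simp
        rw [hrw, hcExp, Finset.sum_ite_eq' univ x (fun y => f y * (2:ℝ) ^ Fintype.card J)]
        simp only [Finset.mem_univ, if_true]
        rw [mul_div_assoc, div_self (by positivity), mul_one]

lemma parseval (f : (J → Bool) → ℝ) :
    hcExp (fun x => f x * f x) = ∑ S : Finset J, (fcoef f S) ^ 2 := by
  have hrw : (fun x => f x * f x)
      = fun x => ∑ S : Finset J, fcoef f S * (f x * walsh S x) := by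
    funext x
    nth_rewrite 1 [← fourier_inv f x]
    rw [Finset.sum_mul]
    exact Finset.sum_congr rfl fun S _ => by ring
  rw [hrw, hcExp_sum]
  refine Finset.sum_congr rfl fun S _ => ?_
  rw [hcExp_const_mul, ← fcoef, sq]

lemma fcoef_empty (f : (J → Bool) → ℝ) : fcoef f ∅ = hcExp f := by
  simp only [fcoef, walsh_empty, mul_one]

lemma fcoef_sub (f g : (J → Bool) → ℝ) (S : Finset J) :
    fcoef (fun x => f x - g x) S = fcoef f S - fcoef g S := by
  simp only [fcoef, sub_mul]
  exact hcExp_sub _ _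

lemma fcoef_const (c : ℝ) (S : Finset J) :
    fcoef (fun _ => c) S = if S = ∅ then c else 0 := by
  rw [fcoef, hcExp_const_mul, hcExp_walsh]
  split <;> simp

lemma hcVar_eq (f : (J → Bool) → ℝ) :
    hcVar f = ∑ S : Finset J, if S = ∅ then 0 else (fcoef f S) ^ 2 := by
  have h1 : hcVar f = hcExp (fun x => (f x - hcExp f) * (f x - hcExp f)) := by
    rw [hcVar]; congr 1; funext x; ring
  rw [h1, parseval]
  refine Finset.sum_congr rfl fun S _ => ?_
  have h2 : fcoef (fun x => f x - hcExp f) S = fcoef f S - (if S = ∅ then hcExp f else 0) := by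
    rw [fcoef_sub f (fun _ => hcExp f) S, fcoef_const]
  rw [h2]
  by_cases hS : S = ∅
  · subst hS; simp [fcoef_empty]
  · simp [hS]

def bflip {J : Type*} [DecidableEq J] (j : J) (x : J → Bool) : J → Bool :=
  Function.update x j (!x j)

lemma bflip_apply (j : J) (x : J → Bool) (i : J) :
    bflip j x i = if i = j then !x j else x i := Function.update_apply x j (!x j) i

lemma bflip_bflip (j : J) (x : J → Bool) : bflip j (bflip j x) = x := by
  funext i
  rcases eq_or_ne i j with rfl | hij
  · simp [bflip_apply]
  · simp [bflip_apply, hij]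

lemma bflip_bijective (j : J) : Function.Bijective (bflip j : (J → Bool) → (J → Bool)) :=
  Function.Involutive.bijective (fun x => bflip_bflip j x)

lemma hcExp_bflip (j : J) (u : (J → Bool) → ℝ) :
    hcExp (fun x => u (bflip j x)) = hcExp u := by
  unfold hcExp
  congr 1
  exact Fintype.sum_bijective (bflip j) (bflip_bijective j) _ u fun x => rfl

lemma walsh_bflip (S : Finset J) (j : J) (x : J → Bool) :
    walsh S (bflip j x) = (if j ∈ S then -1 else 1) * walsh S x := by
  by_cases hj : j ∈ S
  · rw [if_pos hj, walsh_eq_prod, walsh_eq_prod,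
      ← Finset.mul_prod_erase S _ hj, ← Finset.mul_prod_erase S _ hj]
    have h1 : ∀ i ∈ S.erase j, (if bflip j x i then (-1:ℝ) else 1) = if x i then (-1:ℝ) else 1 := by
      intro i hi
      rw [bflip_apply, if_neg (Finset.ne_of_mem_erase hi)]
    rw [Finset.prod_congr rfl h1]
    have h2 : (if bflip j x j then (-1:ℝ) else 1) = -(if x j then (-1:ℝ) else 1) := by
      rw [bflip_apply, if_pos rfl]
      cases x j <;> norm_num
    rw [h2]; ring
  · rw [if_neg hj, one_mul, walsh_eq_prod, walsh_eq_prod]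
    refine Finset.prod_congr rfl fun i hi => ?_
    have : bflip j x i = x i := by
      rw [bflip_apply, if_neg (by rintro rfl; exact hj hi)]
    rw [this]

def DepOn (f : (J → Bool) → ℝ) (s : Finset J) : Prop :=
  ∀ x y : J → Bool, (∀ i ∈ s, x i = y i) → f x = f y

lemma depOn_univ (f : (J → Bool) → ℝ) : DepOn f (univ : Finset J) :=
  fun x y h => by rw [funext fun i => h i (Finset.mem_univ i)]

lemma depOn_bflip {f : (J → Bool) → ℝ} {s : Finset J} (hf : DepOn f s) {j : J} (hj : j ∉ s)
    (x : J → Bool) : f (bflip j x) = f x := by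
  refine hf _ _ fun i hi => ?_
  rw [bflip_apply, if_neg (by rintro rfl; exact hj hi)]

lemma fcoef_eq_zero_of_depOn {f : (J → Bool) → ℝ} {s S : Finset J} (hf : DepOn f s)
    {j : J} (hjS : j ∈ S) (hjs : j ∉ s) : fcoef f S = 0 := by
  have h1 : fcoef f S = hcExp (fun x => f (bflip j x) * walsh S (bflip j x)) := by
    rw [fcoef, ← hcExp_bflip j (fun x => f x * walsh S x)]
  have h2 : (fun x => f (bflip j x) * walsh S (bflip j x))
      = fun x => -(f x * walsh S x) := by
    funext x
    rw [depOn_bflip hf hjs, walsh_bflip, if_pos hjS]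
    ring
  have h3 : fcoef f S = hcExp (fun x => (-1 : ℝ) * (f x * walsh S x)) := by
    rw [h1, h2]; congr 1; funext x; ring
  rw [hcExp_const_mul, ← fcoef] at h3
  linarith

lemma fcoef_rhoD (f : (J → Bool) → ℝ) (j : J) (S : Finset J) :
    fcoef (fun x => (f x - f (bflip j x)) / 2) S = if j ∈ S then fcoef f S else 0 := by
  have key : hcExp (fun x => f (bflip j x) * walsh S x)
      = (if j ∈ S then -1 else 1) * fcoef f S := by
    have h1 : hcExp (fun x => f (bflip j x) * walsh S x)
        = hcExp (fun x => f x * walsh S (bflip j x)) := by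
      rw [← hcExp_bflip j (fun x => f x * walsh S (bflip j x))]
      congr 1
      funext x
      rw [bflip_bflip]
    rw [h1]
    have h2 : (fun x => f x * walsh S (bflip j x))
        = fun x => (if j ∈ S then (-1:ℝ) else 1) * (f x * walsh S x) := by
      funext x
      rw [walsh_bflip]
      ring
    rw [h2, hcExp_const_mul, ← fcoef]
  have expand : (fun x => (f x - f (bflip j x)) / 2 * walsh S x)
      = fun x => (1/2 : ℝ) * (f x * walsh S x - f (bflip j x) * walsh S x) := by
    funext x; ring
  rw [fcoef, expand, hcExp_const_mul, hcExp_sub, key, ← fcoef]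
  by_cases hj : j ∈ S <;> simp [hj] <;> ring

end CubeBasics

-- two-point inequality

-- Lemma A
lemma tpA {s x : ℝ} (hs1 : s ≤ 1) (hx0 : 0 < x) (hx1 : x < 1) :
    (2:ℝ) ≤ (1+x) ^ (s-1) + (1-x) ^ (s-1) := by
  have h1x : (0:ℝ) < 1 + x := by linarith
  have h1x' : (0:ℝ) < 1 - x := by linarith
  have ha : (0:ℝ) < (1+x) ^ (s-1) := Real.rpow_pos_of_pos h1x _
  have hb : (0:ℝ) < (1-x) ^ (s-1) := Real.rpow_pos_of_pos h1x' _
  have hmul : (1:ℝ) ≤ (1+x) ^ (s-1) * (1-x) ^ (s-1) := by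
    rw [← Real.mul_rpow h1x.le h1x'.le]
    have hbase : (0:ℝ) < (1+x) * (1-x) := by nlinarith
    have hbase1 : (1+x) * (1-x) ≤ 1 := by nlinarith
    exact Real.one_le_rpow_of_pos_of_le_one_of_nonpos hbase hbase1 (by linarith)
  nlinarith [sq_nonneg ((1+x) ^ (s-1) - (1-x) ^ (s-1))]

-- Lemma B
lemma tpB {s : ℝ} (hs0 : 0 ≤ s) (hs1 : s ≤ 1) {x : ℝ} (hx0 : 0 ≤ x) (hx1 : x ≤ 1) :
    2*s*x ≤ (1+x) ^ s - (1-x) ^ s := by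
  set G : ℝ → ℝ := fun y => (1+y) ^ s - (1-y) ^ s - 2*s*y with hG
  have hcont : ContinuousOn G (Set.Icc 0 1) := by
    apply ContinuousOn.sub
    apply ContinuousOn.sub
    · exact (continuous_const.add continuous_id).continuousOn.rpow_const fun y _ => Or.inr hs0
    · exact (continuous_const.sub continuous_id).continuousOn.rpow_const fun y _ => Or.inr hs0
    · exact (continuous_const.mul continuous_id).continuousOn
  have hderiv : ∀ y ∈ Set.Ioo (0:ℝ) 1, HasDerivAt G
      (s * (1+y) ^ (s-1) + s * (1-y) ^ (s-1) - 2*s) y := by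
    intro y hy
    obtain ⟨hy0, hy1⟩ := hy
    have h1 : HasDerivAt (fun z : ℝ => 1 + z) 1 y := (hasDerivAt_id y).const_add 1
    have h2 : HasDerivAt (fun z : ℝ => 1 - z) (-1) y := (hasDerivAt_id y).const_sub 1
    have d1 : HasDerivAt (fun z : ℝ => (1+z) ^ s) (s * (1+y) ^ (s-1)) y := by
      have := (Real.hasDerivAt_rpow_const (x := 1 + y) (p := s)
        (Or.inl (by positivity))).comp y h1
      simpa [Function.comp_def] using this
    have d2 : HasDerivAt (fun z : ℝ => (1-z) ^ s) (-(s * (1-y) ^ (s-1))) y := by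
      have := (Real.hasDerivAt_rpow_const (x := 1 - y) (p := s)
        (Or.inl (by norm_num; linarith))).comp y h2
      simpa [Function.comp_def] using this
    have d3 : HasDerivAt (fun z : ℝ => 2*s*z) (2*s) y := by
      simpa using (hasDerivAt_id y).const_mul (2*s)
    have := (d1.sub d2).sub d3
    exact this.congr_deriv (by ring)
  have hmono : MonotoneOn G (Set.Icc 0 1) := by
    apply monotoneOn_of_deriv_nonneg (convex_Icc 0 1) hcont
    · intro y hy
      rw [interior_Icc] at hy
      exact (hderiv y hy).differentiableAt.differentiableWithinAt
    · intro y hy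
      rw [interior_Icc] at hy
      rw [(hderiv y hy).deriv]
      have hA := tpA (s := s) hs1 hy.1 hy.2
      nlinarith
  have hG0 : G 0 = 0 := by simp [hG]
  have := hmono (Set.mem_Icc.mpr ⟨le_refl 0, zero_le_one⟩) (Set.mem_Icc.mpr ⟨hx0, hx1⟩) hx0
  rw [hG0] at this
  simpa [hG] using this

-- Lemma C
lemma tpC {q : ℝ} (hq1 : 1 ≤ q) (hq2 : q ≤ 2) {x : ℝ} (hx0 : 0 ≤ x) (hx1 : x ≤ 1) :
    2 + q*(q-1)*x^2 ≤ (1+x) ^ q + (1-x) ^ q := by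
  have hq0 : (0:ℝ) ≤ q := by linarith
  set F : ℝ → ℝ := fun y => (1+y) ^ q + (1-y) ^ q - 2 - q*(q-1)*y^2 with hF
  have hcont : ContinuousOn F (Set.Icc 0 1) := by
    apply ContinuousOn.sub
    apply ContinuousOn.sub
    apply ContinuousOn.add
    · exact (continuous_const.add continuous_id).continuousOn.rpow_const fun y _ => Or.inr hq0
    · exact (continuous_const.sub continuous_id).continuousOn.rpow_const fun y _ => Or.inr hq0
    · exact continuousOn_const
    · exact (continuous_const.mul (continuous_pow 2)).continuousOn
  have hderiv : ∀ y ∈ Set.Ioo (0:ℝ) 1, HasDerivAt F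
      (q * (1+y) ^ (q-1) - q * (1-y) ^ (q-1) - 2*(q*(q-1))*y) y := by
    intro y hy
    obtain ⟨hy0, hy1⟩ := hy
    have h1 : HasDerivAt (fun z : ℝ => 1 + z) 1 y := (hasDerivAt_id y).const_add 1
    have h2 : HasDerivAt (fun z : ℝ => 1 - z) (-1) y := (hasDerivAt_id y).const_sub 1
    have d1 : HasDerivAt (fun z : ℝ => (1+z) ^ q) (q * (1+y) ^ (q-1)) y := by
      have := (Real.hasDerivAt_rpow_const (x := 1 + y) (p := q)
        (Or.inl (by positivity))).comp y h1
      simpa [Function.comp_def] using this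
    have d2 : HasDerivAt (fun z : ℝ => (1-z) ^ q) (-(q * (1-y) ^ (q-1))) y := by
      have := (Real.hasDerivAt_rpow_const (x := 1 - y) (p := q)
        (Or.inl (by norm_num; linarith))).comp y h2
      simpa [Function.comp_def] using this
    have d3 : HasDerivAt (fun z : ℝ => q*(q-1)*z^2) (2*(q*(q-1))*y) y := by
      have := ((hasDerivAt_pow 2 y)).const_mul (q*(q-1))
      exact this.congr_deriv (by ring)
    have := ((d1.add d2).sub (hasDerivAt_const y 2)).sub d3
    exact this.congr_deriv (by ring)
  have hmono : MonotoneOn F (Set.Icc 0 1) := by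
    apply monotoneOn_of_deriv_nonneg (convex_Icc 0 1) hcont
    · intro y hy
      rw [interior_Icc] at hy
      exact (hderiv y hy).differentiableAt.differentiableWithinAt
    · intro y hy
      rw [interior_Icc] at hy
      rw [(hderiv y hy).deriv]
      have hB := tpB (s := q - 1) (by linarith) (by linarith) hy.1.le hy.2.le
      nlinarith
  have hF0 : F 0 = 0 := by norm_num [hF]
  have := hmono (Set.mem_Icc.mpr ⟨le_refl 0, zero_le_one⟩) (Set.mem_Icc.mpr ⟨hx0, hx1⟩) hx0
  rw [hF0] at this
  simp only [hF] at this
  linarith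

-- Lemma D (Bernoulli, p ≤ 1)
lemma tpD {σ u : ℝ} (hσ0 : 0 ≤ σ) (hσ1 : σ ≤ 1) (hu : 0 ≤ u) :
    (1+u) ^ σ ≤ 1 + σ*u :=
  rpow_one_add_le_one_add_mul_self (by linarith) hσ0 hσ1

-- core two-point inequality
lemma tp_core {q x : ℝ} (hq1 : 1 ≤ q) (hq2 : q ≤ 2) (hx0 : 0 ≤ x) (hx1 : x ≤ 1) :
    (1 + (q-1)*x^2) ^ (q/2) ≤ ((1+x) ^ q + (1-x) ^ q)/2 := by
  have hD := tpD (σ := q/2) (u := (q-1)*x^2) (by linarith) (by linarith)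
    (by nlinarith)
  have hC := tpC hq1 hq2 hx0 hx1
  calc (1 + (q-1)*x^2) ^ (q/2) ≤ 1 + (q/2)*((q-1)*x^2) := hD
    _ ≤ ((1+x) ^ q + (1-x) ^ q)/2 := by nlinarith

lemma tp_scaled {rho A B : ℝ} (hr0 : 0 ≤ rho) (hr1 : rho ≤ 1) (hB : 0 ≤ B) (hBA : B ≤ A) :
    (A^2 + rho^2*B^2) ^ ((1+rho^2)/2)
      ≤ ((A+B) ^ (1+rho^2) + (A-B) ^ (1+rho^2))/2 := by
  set q : ℝ := 1 + rho^2 with hq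
  have hq1 : 1 ≤ q := by nlinarith
  have hq2 : q ≤ 2 := by nlinarith
  have hA0 : 0 ≤ A := le_trans hB hBA
  rcases eq_or_lt_of_le hA0 with hA | hA
  · have hB0 : B = 0 := le_antisymm (by linarith [hBA, hA]) hB
    rw [← hA, hB0]
    norm_num
    rw [Real.zero_rpow (by positivity), Real.zero_rpow (by positivity)]
  · set t : ℝ := B / A with ht
    have ht0 : 0 ≤ t := by positivity
    have ht1 : t ≤ 1 := by rw [ht, div_le_one hA]; exact hBA
    have hAne : A ≠ 0 := ne_of_gt hA
    have htA : A * t = B := by rw [ht]; field_simp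
    have hbase : A^2 + rho^2*B^2 = A^2 * (1 + (q-1)*t^2) := by
      have h2 : A^2 * t^2 = B^2 := by nlinarith [htA]
      nlinarith [h2]
    have hAB1 : A + B = A * (1+t) := by rw [mul_add, mul_one, htA]
    have hAB2 : A - B = A * (1-t) := by rw [mul_sub, mul_one, htA]
    have hAq : ((A:ℝ)^2) ^ (q/2) = A ^ q := by
      rw [← Real.rpow_natCast A 2, ← Real.rpow_mul hA.le,
        show ((2:ℕ):ℝ) * (q/2) = q by push_cast; ring]
    have h1t : (0:ℝ) ≤ 1 + t := by linarith
    have h2t : (0:ℝ) ≤ 1 - t := by linarith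
    rw [hbase, hAB1, hAB2, Real.mul_rpow (by positivity) (by nlinarith),
      Real.mul_rpow hA.le h1t, Real.mul_rpow hA.le h2t, hAq]
    have hcore := tp_core hq1 hq2 ht0 ht1
    calc A ^ q * (1 + (q-1)*t^2) ^ (q/2)
        ≤ A ^ q * (((1+t) ^ q + (1-t) ^ q)/2) := by
          exact mul_le_mul_of_nonneg_left hcore (Real.rpow_nonneg hA.le q)
      _ = (A ^ q * (1+t) ^ q + A ^ q * (1-t) ^ q)/2 := by ring

lemma tp_full {rho a b : ℝ} (hr0 : 0 ≤ rho) (hr1 : rho ≤ 1) :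
    (a^2 + rho^2*b^2) ^ ((1+rho^2)/2)
      ≤ (|a+b| ^ (1+rho^2) + |a-b| ^ (1+rho^2))/2 := by
  set A : ℝ := max |a| |b| with hA
  set B : ℝ := min |a| |b| with hB
  have hB0 : 0 ≤ B := le_min (abs_nonneg a) (abs_nonneg b)
  have hBA : B ≤ A := min_le_max
  have h1 : a^2 + rho^2*b^2 ≤ A^2 + rho^2*B^2 := by
    rcases le_total |b| |a| with hc | hc
    · simp only [hA, hB, max_eq_left hc, min_eq_right hc, sq_abs]
      exact le_rfl
    · simp only [hA, hB, max_eq_right hc, min_eq_left hc, sq_abs]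
      have h2 : a^2 ≤ b^2 := by
        calc a^2 = |a|^2 := (sq_abs a).symm
          _ ≤ |b|^2 := by nlinarith [abs_nonneg a]
          _ = b^2 := sq_abs b
      have hr2 : rho^2 ≤ 1 := by nlinarith
      nlinarith [mul_nonneg (sub_nonneg.2 h2) (sub_nonneg.2 hr2)]
  have hsum : A + B = |a| + |b| := max_add_min |a| |b|
  have hdiff : A - B = abs (|a| - |b|) := (max_sub_min_eq_abs |a| |b|).trans (abs_sub_comm _ _)
  have h2 : |a+b| ^ (1+rho^2) + |a-b| ^ (1+rho^2)
      = (A+B) ^ (1+rho^2) + (A-B) ^ (1+rho^2) := by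
    rw [hsum, hdiff]
    rcases le_total 0 a with ha | ha <;> rcases le_total 0 b with hb | hb
    · have e1 : |a+b| = |a| + |b| := by
        rw [abs_of_nonneg ha, abs_of_nonneg hb, abs_of_nonneg (by linarith)]
      have e2 : |a-b| = abs (|a| - |b|) := by rw [abs_of_nonneg ha, abs_of_nonneg hb]
      rw [e1, e2]
    · have e1 : |a+b| = abs (|a| - |b|) := by
        rw [abs_of_nonneg ha, abs_of_nonpos hb]
        congr 1; ring
      have e2 : |a-b| = |a| + |b| := by
        rw [abs_of_nonneg ha, abs_of_nonpos hb, abs_of_nonneg (by linarith)]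
        ring
      rw [e1, e2]; ring
    · have e1 : |a+b| = abs (|a| - |b|) := by
        rw [abs_of_nonpos ha, abs_of_nonneg hb, ← abs_neg]
        congr 1; ring
      have e2 : |a-b| = |a| + |b| := by
        rw [abs_of_nonpos ha, abs_of_nonneg hb, abs_of_nonpos (by linarith)]
        ring
      rw [e1, e2]; ring
    · have e1 : |a+b| = |a| + |b| := by
        rw [abs_of_nonpos ha, abs_of_nonpos hb, abs_of_nonpos (by linarith)]
        ring
      have e2 : |a-b| = abs (|a| - |b|) := by
        rw [abs_of_nonpos ha, abs_of_nonpos hb, ← abs_neg]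
        congr 1; ring
      rw [e1, e2]
  rw [h2]
  refine le_trans (Real.rpow_le_rpow (by positivity) h1 (by positivity)) ?_
  exact tp_scaled hr0 hr1 hB0 hBA

section DSec
variable {J : Type*} [Fintype J] [DecidableEq J]

lemma minkowski_pair {s' : ℝ} (hs : 1 ≤ s') {x1 y1 x2 y2 : ℝ}
    (hx1 : 0 ≤ x1) (hy1 : 0 ≤ y1) (hx2 : 0 ≤ x2) (hy2 : 0 ≤ y2) :
    ((x1+x2) ^ s' + (y1+y2) ^ s') ^ (1/s')
      ≤ (x1 ^ s' + y1 ^ s') ^ (1/s') + (x2 ^ s' + y2 ^ s') ^ (1/s') := by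
  have := Real.Lp_add_le (univ : Finset Bool)
    (fun b => if b then x1 else y1) (fun b => if b then x2 else y2) hs
  simp only [Fintype.sum_bool, Bool.false_eq_true, if_true, if_false] at this
  rw [abs_of_nonneg hx1, abs_of_nonneg hy1, abs_of_nonneg hx2, abs_of_nonneg hy2,
    abs_of_nonneg (by linarith), abs_of_nonneg (by linarith)] at this
  exact this

lemma N_sum_le {ι : Type*} {s' : ℝ} (hs : 1 ≤ s') (s : Finset ι) (a b : ι → ℝ)
    (ha : ∀ i ∈ s, 0 ≤ a i) (hb : ∀ i ∈ s, 0 ≤ b i) :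
    ((∑ i ∈ s, a i) ^ s' + (∑ i ∈ s, b i) ^ s') ^ (1/s')
      ≤ ∑ i ∈ s, (a i ^ s' + b i ^ s') ^ (1/s') := by
  induction s using Finset.cons_induction with
  | empty =>
    simp only [Finset.sum_empty]
    rw [Real.zero_rpow (by positivity), add_zero, Real.zero_rpow (by positivity)]
  | cons i s his ih =>
    simp only [Finset.sum_cons]
    have ha' : ∀ j ∈ s, 0 ≤ a j := fun j hj => ha j (Finset.mem_cons_of_mem hj)
    have hb' : ∀ j ∈ s, 0 ≤ b j := fun j hj => hb j (Finset.mem_cons_of_mem hj)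
    have hai : 0 ≤ a i := ha i (Finset.mem_cons_self i s)
    have hbi : 0 ≤ b i := hb i (Finset.mem_cons_self i s)
    have hsa : 0 ≤ ∑ j ∈ s, a j := Finset.sum_nonneg ha'
    have hsb : 0 ≤ ∑ j ∈ s, b j := Finset.sum_nonneg hb'
    calc ((a i + ∑ j ∈ s, a j) ^ s' + (b i + ∑ j ∈ s, b j) ^ s') ^ (1/s')
        ≤ (a i ^ s' + b i ^ s') ^ (1/s')
            + ((∑ j ∈ s, a j) ^ s' + (∑ j ∈ s, b j) ^ s') ^ (1/s') :=
          minkowski_pair hs hai hbi hsa hsb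
      _ ≤ (a i ^ s' + b i ^ s') ^ (1/s') + ∑ j ∈ s, (a j ^ s' + b j ^ s') ^ (1/s') := by
          exact add_le_add_right (ih ha' hb') _

lemma hcExp_eq_sum_w (f : (J → Bool) → ℝ) :
    hcExp f = ∑ x : J → Bool, ((2:ℝ) ^ Fintype.card J)⁻¹ * f x := by
  rw [hcExp, div_eq_mul_inv, mul_comm, Finset.mul_sum]

lemma rev_minkowski {r : ℝ} (hr0 : 0 < r) (hr1 : r ≤ 1) (u v : (J → Bool) → ℝ)
    (hu : ∀ x, 0 ≤ u x) (hv : ∀ x, 0 ≤ v x) :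
    (hcExp (fun x => u x ^ r)) ^ (1/r) + (hcExp (fun x => v x ^ r)) ^ (1/r)
      ≤ (hcExp (fun x => (u x + v x) ^ r)) ^ (1/r) := by
  set s' : ℝ := 1/r with hs'
  have hs1 : 1 ≤ s' := by rw [hs', le_div_iff₀ hr0]; linarith
  have hs0 : 0 < s' := by positivity
  set w : ℝ := ((2:ℝ) ^ Fintype.card J)⁻¹ with hw
  have hw0 : 0 < w := by positivity
  set a : (J → Bool) → ℝ := fun x => w * u x ^ r with haa
  set b : (J → Bool) → ℝ := fun x => w * v x ^ r with hbb
  have ha : ∀ x, 0 ≤ a x := fun x => by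
    have := Real.rpow_nonneg (hu x) r; positivity
  have hb : ∀ x, 0 ≤ b x := fun x => by
    have := Real.rpow_nonneg (hv x) r; positivity
  have key := N_sum_le hs1 (univ : Finset (J → Bool)) a b
    (fun x _ => ha x) (fun x _ => hb x)
  have hexp : r * s' = 1 := by rw [hs']; field_simp
  have hexp' : s' * (1/s') = 1 := by field_simp
  have hterm : ∀ x : J → Bool, (a x ^ s' + b x ^ s') ^ (1/s') = w * (u x + v x) ^ r := by
    intro x
    have h1 : a x ^ s' = w ^ s' * u x := by
      rw [haa, Real.mul_rpow hw0.le (Real.rpow_nonneg (hu x) r),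
        ← Real.rpow_mul (hu x), hexp, Real.rpow_one]
    have h2 : b x ^ s' = w ^ s' * v x := by
      rw [hbb, Real.mul_rpow hw0.le (Real.rpow_nonneg (hv x) r),
        ← Real.rpow_mul (hv x), hexp, Real.rpow_one]
    have hsum : a x ^ s' + b x ^ s' = w ^ s' * (u x + v x) := by rw [h1, h2, mul_add]
    rw [hsum, Real.mul_rpow (Real.rpow_nonneg hw0.le s') (by have := hu x; have := hv x; positivity),
      ← Real.rpow_mul hw0.le, hexp', Real.rpow_one, hs', one_div_one_div]
  have hXa : ∑ x : J → Bool, a x = hcExp (fun x => u x ^ r) := (hcExp_eq_sum_w _).symm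
  have hYb : ∑ x : J → Bool, b x = hcExp (fun x => v x ^ r) := (hcExp_eq_sum_w _).symm
  have hC : ∑ x : J → Bool, (a x ^ s' + b x ^ s') ^ (1/s')
      = hcExp (fun x => (u x + v x) ^ r) := by
    rw [Finset.sum_congr rfl fun x _ => hterm x]
    exact (hcExp_eq_sum_w _).symm
  rw [hXa, hYb, hC] at key
  set X := hcExp (fun x => u x ^ r) with hX
  set Y := hcExp (fun x => v x ^ r) with hY
  set C := hcExp (fun x => (u x + v x) ^ r) with hC2
  have hX0 : 0 ≤ X := hcExp_nonneg fun x => Real.rpow_nonneg (hu x) r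
  have hY0 : 0 ≤ Y := hcExp_nonneg fun x => Real.rpow_nonneg (hv x) r
  have hXY : 0 ≤ X ^ s' + Y ^ s' := by positivity
  have key2 := Real.rpow_le_rpow (Real.rpow_nonneg hXY (1/s')) key hs0.le
  rw [← Real.rpow_mul hXY, one_div_mul_cancel hs0.ne', Real.rpow_one] at key2
  rw [hs'] at key2
  exact key2

end DSec

section Hyper
variable {J : Type*} [Fintype J] [DecidableEq J]

lemma fcoef_add (f g : (J → Bool) → ℝ) (S : Finset J) :
    fcoef (fun x => f x + g x) S = fcoef f S + fcoef g S := by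
  simp only [fcoef, add_mul]
  exact hcExp_add _ _

lemma walsh_singleton (j : J) (x : J → Bool) :
    walsh {j} x = if x j then (-1:ℝ) else 1 := by
  rw [walsh_eq_prod, Finset.prod_singleton]

lemma symmDiff_singleton_not_mem {j : J} {S : Finset J} (h : j ∉ S) :
    symmDiff ({j} : Finset J) S = insert j S := by
  ext i
  by_cases hij : i = j
  · subst hij
    simp [symmDiff_def, h]
  · simp [symmDiff_def, hij]

lemma symmDiff_singleton_insert {j : J} {S : Finset J} (h : j ∉ S) :
    symmDiff ({j} : Finset J) (insert j S) = S := by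
  ext i
  by_cases hij : i = j
  · subst hij
    simp [symmDiff_def, h]
  · simp [symmDiff_def, hij]

lemma hcExp_avg (j : J) (u : (J → Bool) → ℝ) :
    hcExp u = hcExp (fun x => (u (Function.update x j false) + u (Function.update x j true))/2) := by
  have key : ∀ x : J → Bool,
      u (Function.update x j false) + u (Function.update x j true) = u x + u (bflip j x) := by
    intro x
    cases hxj : x j with
    | false =>
      have h1 : Function.update x j false = x := by rw [← hxj]; exact Function.update_eq_self j x
      have h2 : Function.update x j true = bflip j x := by rw [bflip, hxj]; rfl
      rw [h1, h2]
    | true =>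
      have h1 : Function.update x j true = x := by rw [← hxj]; exact Function.update_eq_self j x
      have h2 : Function.update x j false = bflip j x := by rw [bflip, hxj]; rfl
      rw [h1, h2, add_comm]
  have : (fun x => (u (Function.update x j false) + u (Function.update x j true))/2)
      = fun x => (1/2 : ℝ) * (u x + u (bflip j x)) := by
    funext x; rw [key x]; ring
  rw [this, hcExp_const_mul, hcExp_add, hcExp_bflip]
  ring

theorem hyper {p : ℝ} (hp0 : 0 ≤ p) (hp1 : p ≤ 1) (s : Finset J) :
    ∀ f : (J → Bool) → ℝ, DepOn f s →
      ∑ S ∈ s.powerset, (p^2) ^ S.card * (fcoef f S) ^ 2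
        ≤ (hcExp fun x => |f x| ^ (1+p^2)) ^ (2/(1+p^2)) := by
  have hq0 : (0:ℝ) < 1 + p^2 := by positivity
  have hq1 : (1:ℝ) ≤ 1 + p^2 := by nlinarith
  have hq2 : (1:ℝ) + p^2 ≤ 2 := by nlinarith
  have hr0 : (0:ℝ) < (1+p^2)/2 := by positivity
  have hr1 : (1+p^2)/2 ≤ 1 := by linarith
  -- generic conversion lemma
  have hgr : ∀ u : (J → Bool) → ℝ, (hcExp fun x => |u x| ^ (1+p^2)) ^ (2/(1+p^2))
      = (hcExp fun x => (u x^2) ^ ((1+p^2)/2)) ^ (1/((1+p^2)/2)) := by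
    intro u
    have h1 : ∀ x : J → Bool, (u x^2) ^ ((1+p^2)/2) = |u x| ^ (1+p^2) := by
      intro x
      rw [← sq_abs, ← Real.rpow_natCast |u x| 2, ← Real.rpow_mul (abs_nonneg _),
        show ((2:ℕ):ℝ) * ((1+p^2)/2) = 1+p^2 by push_cast; ring]
    have h2 : (fun x => (u x^2) ^ ((1+p^2)/2)) = fun x => |u x| ^ (1+p^2) := funext h1
    rw [h2, one_div_div]
  induction s using Finset.induction_on with
  | empty =>
    intro f hf
    have hfc : ∀ x, f x = f (fun _ => false) :=
      fun x => hf x (fun _ => false) (by intro i hi; simp at hi)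
    have hfe : f = fun _ => f (fun _ => false) := funext hfc
    have h1 : fcoef f ∅ = f (fun _ => false) := by
      rw [fcoef_empty, hfe, hcExp_const]
    have h2 : (hcExp fun x => |f x| ^ (1+p^2)) = |f (fun _ => false)| ^ (1+p^2) := by
      have : (fun x => |f x| ^ (1+p^2)) = fun _ => |f (fun _ => false)| ^ (1+p^2) := by
        funext x; rw [hfc x]
      rw [this, hcExp_const]
    rw [Finset.powerset_empty, Finset.sum_singleton, h1, h2,
      ← Real.rpow_mul (abs_nonneg _),
      show (1+p^2) * (2/(1+p^2)) = ((2:ℕ):ℝ) by push_cast; field_simp,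
      Real.rpow_natCast, sq_abs, Finset.card_empty, pow_zero, one_mul]
  | @insert j s hjs ih =>
    intro f hf
    set g : (J → Bool) → ℝ :=
      fun x => (f (Function.update x j false) + f (Function.update x j true))/2 with hgdef
    set h : (J → Bool) → ℝ :=
      fun x => (f (Function.update x j false) - f (Function.update x j true))/2 with hhdef
    have hgs : DepOn g s := by
      intro x y hxy
      simp only [hgdef]
      have key : ∀ b : Bool, f (Function.update x j b) = f (Function.update y j b) := by
        intro b
        apply hf
        intro i hi
        rcases Finset.mem_insert.mp hi with rfl | his
        · rw [Function.update_self, Function.update_self]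
        · have hij : i ≠ j := by rintro rfl; exact hjs his
          rw [Function.update_of_ne hij, Function.update_of_ne hij]
          exact hxy i his
      rw [key false, key true]
    have hhs : DepOn h s := by
      intro x y hxy
      simp only [hhdef]
      have key : ∀ b : Bool, f (Function.update x j b) = f (Function.update y j b) := by
        intro b
        apply hf
        intro i hi
        rcases Finset.mem_insert.mp hi with rfl | his
        · rw [Function.update_self, Function.update_self]
        · have hij : i ≠ j := by rintro rfl; exact hjs his
          rw [Function.update_of_ne hij, Function.update_of_ne hij]
          exact hxy i his
      rw [key false, key true]
    have hfgh : ∀ x, f x = g x + walsh {j} x * h x := by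
      intro x
      rw [walsh_singleton]
      simp only [hgdef, hhdef]
      cases hxj : x j with
      | false =>
        have h1 : Function.update x j false = x := by
          rw [← hxj]; exact Function.update_eq_self j x
        rw [h1, if_neg (by simp [hxj])]
        ring
      | true =>
        have h1 : Function.update x j true = x := by
          rw [← hxj]; exact Function.update_eq_self j x
        rw [h1, if_pos (by simp [hxj])]
        ring
    have hfe : f = fun x => g x + walsh {j} x * h x := funext hfgh
    -- coefficient identities
    have hchi : ∀ T : Finset J, fcoef (fun x => walsh {j} x * h x) T
        = fcoef h (symmDiff ({j} : Finset J) T) := by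
      intro T
      rw [fcoef, fcoef]
      congr 1
      funext x
      rw [← walsh_mul]
      ring
    have hC1 : ∀ S ∈ s.powerset, fcoef f S = fcoef g S := by
      intro S hS
      have hjS : j ∉ S := fun hc => hjs (Finset.mem_powerset.mp hS hc)
      rw [hfe, fcoef_add, hchi, symmDiff_singleton_not_mem hjS,
        fcoef_eq_zero_of_depOn hhs (Finset.mem_insert_self j S) hjs, add_zero]
    have hC2 : ∀ S ∈ s.powerset, fcoef f (insert j S) = fcoef h S := by
      intro S hS
      have hjS : j ∉ S := fun hc => hjs (Finset.mem_powerset.mp hS hc)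
      rw [hfe, fcoef_add, hchi, symmDiff_singleton_insert hjS,
        fcoef_eq_zero_of_depOn hgs (Finset.mem_insert_self j S) hjs, zero_add]
    have hsplit : ∑ S ∈ (insert j s).powerset, (p^2) ^ S.card * fcoef f S ^ 2
        = (∑ S ∈ s.powerset, (p^2) ^ S.card * fcoef g S ^2)
          + p^2 * ∑ S ∈ s.powerset, (p^2) ^ S.card * fcoef h S ^2 := by
      rw [Finset.sum_powerset_insert hjs]
      congr 1
      · exact Finset.sum_congr rfl fun S hS => by rw [hC1 S hS]
      · rw [Finset.mul_sum]
        refine Finset.sum_congr rfl fun S hS => ?_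
        have hjS : j ∉ S := fun hc => hjs (Finset.mem_powerset.mp hS hc)
        rw [hC2 S hS, Finset.card_insert_of_notMem hjS, pow_succ]
        ring
    have ihg := ih g hgs
    have ihh := ih h hhs
    have step1 : ∑ S ∈ (insert j s).powerset, (p^2) ^ S.card * fcoef f S ^ 2
        ≤ (hcExp fun x => |g x| ^ (1+p^2)) ^ (2/(1+p^2))
          + p^2 * (hcExp fun x => |h x| ^ (1+p^2)) ^ (2/(1+p^2)) := by
      rw [hsplit]
      exact add_le_add ihg (mul_le_mul_of_nonneg_left ihh (sq_nonneg p))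
    -- convert p² * H2 to r-form
    have hph : p^2 * (hcExp fun x => |h x| ^ (1+p^2)) ^ (2/(1+p^2))
        = (hcExp fun x => (p^2 * h x^2) ^ ((1+p^2)/2)) ^ (1/((1+p^2)/2)) := by
      have e1 : (fun x => (p^2 * h x^2) ^ ((1+p^2)/2))
          = fun x => (p^2)^((1+p^2)/2) * (h x^2) ^ ((1+p^2)/2) := by
        funext x
        exact Real.mul_rpow (sq_nonneg p) (sq_nonneg (h x))
      rw [e1, hcExp_const_mul,
        Real.mul_rpow (Real.rpow_nonneg (sq_nonneg p) _)
          (hcExp_nonneg fun x => Real.rpow_nonneg (sq_nonneg (h x)) _),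
        ← Real.rpow_mul (sq_nonneg p), mul_one_div_cancel hr0.ne', Real.rpow_one,
        ← hgr h]
    have step2 : (hcExp fun x => |g x| ^ (1+p^2)) ^ (2/(1+p^2))
          + p^2 * (hcExp fun x => |h x| ^ (1+p^2)) ^ (2/(1+p^2))
        ≤ (hcExp fun x => (g x^2 + p^2 * h x^2) ^ ((1+p^2)/2)) ^ (1/((1+p^2)/2)) := by
      rw [hgr g, hph]
      exact rev_minkowski hr0 hr1 (fun x => g x^2) (fun x => p^2 * h x^2)
        (fun x => sq_nonneg _) (fun x => by positivity)
    have step3 : hcExp (fun x => (g x^2 + p^2 * h x^2) ^ ((1+p^2)/2))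
        ≤ hcExp (fun x => |f x| ^ (1+p^2)) := by
      have havg := hcExp_avg j (fun x => |f x| ^ (1+p^2))
      have e1 : ∀ x : J → Bool, f (Function.update x j false) = g x + h x := by
        intro x; simp only [hgdef, hhdef]; ring
      have e2 : ∀ x : J → Bool, f (Function.update x j true) = g x - h x := by
        intro x; simp only [hgdef, hhdef]; ring
      have havg2 : hcExp (fun x => |f x| ^ (1+p^2))
          = hcExp (fun x => (|g x + h x| ^ (1+p^2) + |g x - h x| ^ (1+p^2))/2) := by
        rw [havg]
        congr 1
        funext x
        rw [e1 x, e2 x]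
      rw [havg2]
      apply hcExp_mono
      intro x
      exact tp_full hp0 hp1
    calc ∑ S ∈ (insert j s).powerset, (p^2) ^ S.card * fcoef f S ^ 2
        ≤ (hcExp fun x => (g x^2 + p^2 * h x^2) ^ ((1+p^2)/2)) ^ (1/((1+p^2)/2)) :=
          le_trans step1 step2
      _ ≤ (hcExp fun x => |f x| ^ (1+p^2)) ^ (1/((1+p^2)/2)) := by
          apply Real.rpow_le_rpow
            (hcExp_nonneg fun x => Real.rpow_nonneg (by positivity) _) step3 (by positivity)
      _ = (hcExp fun x => |f x| ^ (1+p^2)) ^ (2/(1+p^2)) := by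
          rw [one_div_div]

end Hyper

section Final
lemma int_pow_01 (n : ℕ) : (∫ p in (0:ℝ)..1, p ^ n) = 1/(n+1) := by
  rw [integral_pow]
  norm_num

variable {J : Type*} [Fintype J] [DecidableEq J]

lemma lqNorm_sq {q : ℝ} (hq : 0 < q) (g : (J → Bool) → ℝ) :
    lqNorm q g ^ 2 = (hcExp fun x => |g x| ^ q) ^ (2/q) := by
  have h0 : 0 ≤ hcExp fun x => |g x| ^ q :=
    hcExp_nonneg fun x => Real.rpow_nonneg (abs_nonneg _) _
  rw [lqNorm, ← Real.rpow_natCast ((hcExp fun x => |g x| ^ q) ^ (1/q)) 2,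
    ← Real.rpow_mul h0, show (1/q) * ((2:ℕ):ℝ) = 2/q by push_cast; ring]

lemma hyper_rhoD (f : (J → Bool) → ℝ) (j : J) {p : ℝ} (hp0 : 0 ≤ p) (hp1 : p ≤ 1) :
    ∑ S : Finset J, (if j ∈ S then (p^2) ^ S.card * (fcoef f S) ^ 2 else 0)
      ≤ lqNorm (1+p^2) (rhoD j f) ^ 2 := by
  have hq0 : (0:ℝ) < 1 + p^2 := by positivity
  have key := hyper hp0 hp1 (univ : Finset J) (rhoD j f) (depOn_univ _)
  rw [Finset.powerset_univ] at key
  rw [lqNorm_sq hq0]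
  refine le_trans (le_of_eq ?_) key
  refine Finset.sum_congr rfl fun S _ => ?_
  have hco : fcoef (rhoD j f) S = if j ∈ S then fcoef f S else 0 := by
    have : rhoD j f = fun x => (f x - f (bflip j x))/2 := rfl
    rw [this, fcoef_rhoD]
  rw [hco]
  by_cases hjS : j ∈ S <;> simp [hjS]

lemma cont_lq (g : (J → Bool) → ℝ) :
    Continuous fun p : ℝ => lqNorm (1+p^2) g ^ 2 := by
  have hbase : Continuous fun p : ℝ => hcExp fun x => |g x| ^ (1+p^2) := by
    simp only [hcExp]
    apply Continuous.div_const
    apply continuous_finset_sum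
    intro x _
    exact continuous_const.rpow (by continuity) (fun p => Or.inr (by positivity))
  have hexp : Continuous fun p : ℝ => 1/(1+p^2) := by
    apply Continuous.div continuous_const (by continuity)
    intro p
    positivity
  have hlq : Continuous fun p : ℝ => lqNorm (1+p^2) g := by
    simp only [lqNorm]
    exact hbase.rpow hexp (fun p => Or.inr (by positivity))
  exact hlq.pow 2

lemma phi_cont (f : (J → Bool) → ℝ) (j : J) :
    Continuous fun p : ℝ =>
      ∑ S : Finset J, (if j ∈ S then (p^2) ^ S.card * (fcoef f S) ^ 2 else 0) := by
  apply continuous_finset_sum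
  intro S _
  by_cases hjS : j ∈ S
  · simp only [hjS, if_true]
    continuity
  · simp only [hjS, if_false]
    exact continuous_const

lemma phi_integral (f : (J → Bool) → ℝ) (j : J) :
    (∫ p in (0:ℝ)..1, ∑ S : Finset J, (if j ∈ S then (p^2) ^ S.card * (fcoef f S) ^ 2 else 0))
      = ∑ S : Finset J,
          (if j ∈ S then (fcoef f S) ^ 2 / (2 * S.card + 1) else 0) := by
  rw [intervalIntegral.integral_finset_sum]
  swap
  · intro S _
    by_cases hjS : j ∈ S
    · simp only [hjS, if_true]
      exact (Continuous.intervalIntegrable (by continuity) _ _)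
    · simp only [hjS, if_false]
      exact intervalIntegrable_const
  refine Finset.sum_congr rfl fun S _ => ?_
  by_cases hjS : j ∈ S
  · simp only [hjS, if_true]
    have hpow : ∀ p : ℝ, (p^2) ^ S.card = p ^ (2 * S.card) := fun p => (pow_mul p 2 S.card).symm
    rw [intervalIntegral.integral_congr (g := fun p => p ^ (2 * S.card) * (fcoef f S)^2)
      (fun p _ => by rw [hpow])]
    rw [intervalIntegral.integral_mul_const, int_pow_01]
    push_cast
    ring
  · simp only [hjS, if_false]
    simp

end Final


/-- `Var(f) ≤ 3 Σ_j ∫_0^1 ‖ρ_j f‖_{1+p²}² dp`. -/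
theorem stmt5 {J : Type*} [Fintype J] [DecidableEq J] (f : (J → Bool) → ℝ) :
    hcVar f ≤ 3 * ∑ j : J, ∫ p in (0:ℝ)..1, (lqNorm (1 + p ^ 2) (rhoD j f)) ^ 2 := by
  have key1 : ∀ j : J,
      (∫ p in (0:ℝ)..1, ∑ S : Finset J, (if j ∈ S then (p^2) ^ S.card * (fcoef f S) ^ 2 else 0))
        ≤ ∫ p in (0:ℝ)..1, (lqNorm (1 + p ^ 2) (rhoD j f)) ^ 2 := by
    intro j
    apply intervalIntegral.integral_mono_on (by norm_num)
      ((phi_cont f j).intervalIntegrable _ _)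
      ((cont_lq (rhoD j f)).intervalIntegrable _ _)
    intro p hp
    exact hyper_rhoD f j hp.1 hp.2
  have key2 : ∑ j : J,
      (∫ p in (0:ℝ)..1, ∑ S : Finset J, (if j ∈ S then (p^2) ^ S.card * (fcoef f S) ^ 2 else 0))
        = ∑ S : Finset J, (S.card : ℝ) * ((fcoef f S) ^ 2 / (2 * S.card + 1)) := by
    rw [Finset.sum_congr rfl fun j _ => phi_integral f j]
    rw [Finset.sum_comm]
    refine Finset.sum_congr rfl fun S _ => ?_
    rw [Finset.sum_ite_mem, Finset.univ_inter, Finset.sum_const, nsmul_eq_mul]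
  have key3 : hcVar f ≤ 3 * ∑ S : Finset J, (S.card : ℝ) * ((fcoef f S) ^ 2 / (2 * S.card + 1)) := by
    rw [hcVar_eq f, Finset.mul_sum]
    refine Finset.sum_le_sum fun S _ => ?_
    by_cases hS : S = ∅
    · subst hS; simp
    · rw [if_neg hS]
      have hk1 : (1:ℝ) ≤ S.card := by
        have : 0 < S.card := Finset.card_pos.mpr (Finset.nonempty_iff_ne_empty.mpr hS)
        exact_mod_cast this
      have h2k : (0:ℝ) < 2 * S.card + 1 := by positivity
      have hc : (0:ℝ) ≤ (fcoef f S) ^ 2 := sq_nonneg _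
      rw [show (3:ℝ) * ((S.card : ℝ) * ((fcoef f S) ^ 2 / (2 * S.card + 1)))
          = 3 * (S.card : ℝ) * (fcoef f S) ^ 2 / (2 * S.card + 1) by ring,
        le_div_iff₀ h2k]
      nlinarith [mul_nonneg (sub_nonneg.2 hk1) hc]
  calc hcVar f ≤ 3 * ∑ S : Finset J, (S.card : ℝ) * ((fcoef f S) ^ 2 / (2 * S.card + 1)) := key3
    _ = 3 * ∑ j : J, (∫ p in (0:ℝ)..1,
          ∑ S : Finset J, (if j ∈ S then (p^2) ^ S.card * (fcoef f S) ^ 2 else 0)) := by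
        rw [key2]
    _ ≤ 3 * ∑ j : J, ∫ p in (0:ℝ)..1, (lqNorm (1 + p ^ 2) (rhoD j f)) ^ 2 := by
        exact mul_le_mul_of_nonneg_left (Finset.sum_le_sum fun j _ => key1 j) (by norm_num)
end

section
/- For any real-valued random variable h on a probability space with 0 < ‖h‖_1 ≤ ‖h‖_2 < ∞, one has ∫_0^1 ‖h‖_{1+p^2}^2 dp ≤ ‖h‖_2^2 · (1 - (‖h‖_1/‖h‖_2)^{6/5}) / log(‖h‖_2/‖h‖_1), where the right side is interpreted as ‖h‖_2^2 · (6/5) when ‖h‖_1 = ‖h‖_2. -/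
open MeasureTheory
open scoped ENNReal

/-- Hölder interpolation step: `∫ |h|^(1+p²) ≤ (∫ h²)^(p²) (∫|h|)^(1-p²)`. -/
lemma stmt7_holder {Ω : Type*} [MeasurableSpace Ω] (μ : Measure Ω) [IsProbabilityMeasure μ]
    (h : Ω → ℝ) (hL2 : MemLp h 2 μ) {p : ℝ} (hp0 : 0 ≤ p) (hp1 : p ≤ 1) :
    (∫ x, |h x| ^ (1 + p ^ 2) ∂μ) ≤
      (∫ x, h x ^ 2 ∂μ) ^ (p ^ 2) * (∫ x, |h x| ∂μ) ^ (1 - p ^ 2) := by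
  have habs : MemLp (fun x => |h x|) 2 μ := by
    have := hL2.norm
    simpa [Real.norm_eq_abs] using this
  rcases eq_or_lt_of_le hp0 with hp0' | hp0'
  · -- p = 0
    subst hp0'
    simp [Real.rpow_one]
  rcases eq_or_lt_of_le hp1 with hp1' | hp1'
  · -- p = 1
    subst hp1'
    norm_num
  -- 0 < p < 1
  have hp2pos : (0:ℝ) < p ^ 2 := by positivity
  have hp2lt : p ^ 2 < 1 := by nlinarith
  have h1mp : (0:ℝ) < 1 - p ^ 2 := by linarith
  have hpq : Real.HolderConjugate (1 / p ^ 2) (1 / (1 - p ^ 2)) := by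
    rw [Real.holderConjugate_iff]; constructor
    · rw [lt_div_iff₀ hp2pos]; linarith
    · rw [one_div, one_div, inv_inv, inv_inv]; ring
  have habs1 : MemLp (fun x => |h x|) 1 μ := habs.mono_exponent (by norm_num)
  have hf : MemLp (fun x => |h x| ^ (2 * p ^ 2)) (ENNReal.ofReal (1 / p ^ 2)) μ := by
    have H := habs.norm_rpow_div (ENNReal.ofReal (2 * p ^ 2))
    have e1 : (2 : ℝ≥0∞) / ENNReal.ofReal (2 * p ^ 2) = ENNReal.ofReal (1 / p ^ 2) := by
      rw [show (2 : ℝ≥0∞) = ENNReal.ofReal 2 by norm_num,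
        ← ENNReal.ofReal_div_of_pos (by positivity)]
      congr 1
      field_simp
    rw [e1] at H
    simpa [Real.norm_eq_abs, abs_abs, ENNReal.toReal_ofReal (by positivity : (0:ℝ) ≤ 2 * p ^ 2),
      ENNReal.toReal_ofReal (sq_nonneg p)]
      using H
  have hg : MemLp (fun x => |h x| ^ (1 - p ^ 2)) (ENNReal.ofReal (1 / (1 - p ^ 2))) μ := by
    have H := habs1.norm_rpow_div (ENNReal.ofReal (1 - p ^ 2))
    have e1 : (1 : ℝ≥0∞) / ENNReal.ofReal (1 - p ^ 2) = ENNReal.ofReal (1 / (1 - p ^ 2)) := by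
      rw [show (1 : ℝ≥0∞) = ENNReal.ofReal 1 by norm_num,
        ← ENNReal.ofReal_div_of_pos h1mp]
    rw [e1] at H
    simpa [Real.norm_eq_abs, abs_abs, ENNReal.toReal_ofReal h1mp.le] using H
  have H := integral_mul_le_Lp_mul_Lq_of_nonneg hpq
    (Filter.Eventually.of_forall fun x => Real.rpow_nonneg (abs_nonneg _) _)
    (Filter.Eventually.of_forall fun x => Real.rpow_nonneg (abs_nonneg _) _) hf hg
  have e2 : ∀ x, |h x| ^ (2 * p ^ 2) * |h x| ^ (1 - p ^ 2) = |h x| ^ (1 + p ^ 2) := by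
    intro x
    rw [← Real.rpow_add_of_nonneg (abs_nonneg _) (by positivity) h1mp.le]
    ring_nf
  have e3 : ∀ x, (|h x| ^ (2 * p ^ 2)) ^ (1 / p ^ 2 : ℝ) = h x ^ 2 := by
    intro x
    rw [← Real.rpow_mul (abs_nonneg _)]
    rw [show 2 * p ^ 2 * (1 / p ^ 2) = (2:ℝ) by field_simp]
    rw [Real.rpow_two, sq_abs]
  have e4 : ∀ x, (|h x| ^ (1 - p ^ 2)) ^ (1 / (1 - p ^ 2) : ℝ) = |h x| := by
    intro x
    rw [← Real.rpow_mul (abs_nonneg _)]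
    rw [show (1 - p ^ 2) * (1 / (1 - p ^ 2)) = (1:ℝ) by field_simp]
    exact Real.rpow_one _
  simp only [e2, e3, e4, one_div_one_div] at H
  exact H


open scoped Classical in
/-- for a random variable `h` with `0 < ‖h‖₁ ≤ ‖h‖₂ < ∞`,
`∫_0^1 ‖h‖_{1+p²}² dp ≤ ‖h‖₂² (1 - (‖h‖₁/‖h‖₂)^{6/5}) / log(‖h‖₂/‖h‖₁)`,
the right-hand side being interpreted as `(6/5)‖h‖₂²` when `‖h‖₁ = ‖h‖₂`. -/
theorem stmt7 {Ω : Type*} [MeasurableSpace Ω] (μ : Measure Ω) [IsProbabilityMeasure μ]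
    (h : Ω → ℝ) (hL2 : MemLp h 2 μ) (h1 : 0 < ∫ x, |h x| ∂μ) :
    (∫ p in (0:ℝ)..1, (∫ x, |h x| ^ (1 + p ^ 2) ∂μ) ^ (2 / (1 + p ^ 2))) ≤
      if (∫ x, |h x| ∂μ) = (∫ x, h x ^ 2 ∂μ) ^ ((1:ℝ)/2) then
        (∫ x, h x ^ 2 ∂μ) * (6 / 5)
      else
        (∫ x, h x ^ 2 ∂μ) *
          (1 - ((∫ x, |h x| ∂μ) / (∫ x, h x ^ 2 ∂μ) ^ ((1:ℝ)/2)) ^ ((6:ℝ)/5)) /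
          Real.log ((∫ x, h x ^ 2 ∂μ) ^ ((1:ℝ)/2) / ∫ x, |h x| ∂μ) := by
  set A := ∫ x, |h x| ∂μ with hAdef
  set B := ∫ x, h x ^ 2 ∂μ with hBdef
  have hB0 : 0 ≤ B := integral_nonneg fun x => sq_nonneg _
  set b := B ^ ((1:ℝ)/2) with hbdef
  -- Cauchy-Schwarz: A ≤ b
  have habs : MemLp (fun x => |h x|) 2 μ := by
    have := hL2.norm
    simpa [Real.norm_eq_abs] using this
  have hAb : A ≤ b := by
    have hone : MemLp (fun _ : Ω => (1:ℝ)) (ENNReal.ofReal 2) μ := by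
      rw [show ENNReal.ofReal 2 = 2 by norm_num]
      exact memLp_const 1
    have habs2 : MemLp (fun x => |h x|) (ENNReal.ofReal 2) μ := by
      rw [show ENNReal.ofReal 2 = 2 by norm_num]; exact habs
    have hpq : Real.HolderConjugate 2 2 := Real.holderConjugate_iff.mpr ⟨by norm_num, by norm_num⟩
    have H := integral_mul_le_Lp_mul_Lq_of_nonneg hpq
      (Filter.Eventually.of_forall fun x => abs_nonneg _)
      (Filter.Eventually.of_forall fun x => zero_le_one) habs2 hone
    have H2 : A ≤ B ^ (2⁻¹ : ℝ) := by simpa [Real.rpow_two, sq_abs] using H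
    rwa [hbdef, show (1:ℝ)/2 = 2⁻¹ by norm_num]
  have hb0 : 0 < b := lt_of_lt_of_le h1 hAb
  have hBpos : 0 < B := by
    rcases hB0.lt_or_eq with h' | h'
    · exact h'
    · exfalso; rw [hbdef, ← h', Real.zero_rpow (by norm_num)] at hb0; exact lt_irrefl 0 hb0
  have hbB : b ^ (2:ℝ) = B := by
    rw [hbdef, ← Real.rpow_mul hB0]
    norm_num
  set r := A / b with hrdef
  have hr0 : 0 < r := div_pos h1 hb0
  have hr1 : r ≤ 1 := (div_le_one hb0).2 hAb
  have hrb : A = r * b := by rw [hrdef, div_mul_cancel₀ _ (ne_of_gt hb0)]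
  -- pointwise bound
  have key : ∀ p ∈ Set.Icc (0:ℝ) 1,
      (∫ x, |h x| ^ (1 + p ^ 2) ∂μ) ^ (2 / (1 + p ^ 2)) ≤
        B * Real.exp (Real.log r * (2 - 2 * p)) := by
    intro p hp
    obtain ⟨hp0, hp1⟩ := hp
    have h1p : (0:ℝ) < 1 + p ^ 2 := by positivity
    have step1 := stmt7_holder μ h hL2 hp0 hp1
    have hInt0 : 0 ≤ ∫ x, |h x| ^ (1 + p ^ 2) ∂μ :=
      integral_nonneg fun x => Real.rpow_nonneg (abs_nonneg _) _
    have step2 := Real.rpow_le_rpow hInt0 step1 (by positivity : (0:ℝ) ≤ 2 / (1 + p ^ 2))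
    refine step2.trans ?_
    have step3 : (B ^ (p ^ 2) * A ^ (1 - p ^ 2)) ^ (2 / (1 + p ^ 2)) =
        B * r ^ (2 * (1 - p ^ 2) / (1 + p ^ 2)) := by
      have hA0 : (0:ℝ) < A := h1
      have hmul : (0:ℝ) < B ^ (p ^ 2) * A ^ (1 - p ^ 2) :=
        mul_pos (Real.rpow_pos_of_pos hBpos _) (Real.rpow_pos_of_pos hA0 _)
      rw [Real.rpow_def_of_pos hmul, Real.log_mul (ne_of_gt (Real.rpow_pos_of_pos hBpos _))
        (ne_of_gt (Real.rpow_pos_of_pos hA0 _)), Real.log_rpow hBpos, Real.log_rpow hA0,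
        Real.rpow_def_of_pos hr0, ← Real.exp_log hBpos, ← Real.exp_add, Real.exp_eq_exp]
      have hlr : Real.log r = Real.log A - (1/2) * Real.log B := by
        rw [hrdef, Real.log_div (ne_of_gt hA0) (ne_of_gt hb0), hbdef, Real.log_rpow hBpos]
      rw [hlr]
      field_simp
      rw [Real.log_exp]; ring
    rw [step3]
    have hle : 2 - 2 * p ≤ 2 * (1 - p ^ 2) / (1 + p ^ 2) := by
      rw [le_div_iff₀ h1p]
      nlinarith [mul_nonneg hp0 (sq_nonneg (p - 1))]
    rw [← Real.rpow_def_of_pos hr0]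
    exact mul_le_mul_of_nonneg_left (Real.rpow_le_rpow_of_exponent_ge hr0 hr1 hle) hB0
  -- the majorant and its integral
  set G : ℝ → ℝ := fun p => B * Real.exp (Real.log r * (2 - 2 * p)) with hGdef
  have hGc : Continuous G := by fun_prop
  have hGint : IntervalIntegrable G MeasureTheory.volume 0 1 := hGc.intervalIntegrable 0 1
  have hG0 : ∀ p ∈ Set.Icc (0:ℝ) 1, 0 ≤ G p := fun p _ =>
    mul_nonneg hB0 (Real.exp_pos _).le
  have hIG : (∫ p in (0:ℝ)..1, G p) ≤
      if A = b then B * (6 / 5) else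
        B * (1 - (A / b) ^ ((6:ℝ)/5)) / Real.log (b / A) := by
    by_cases hc : A = b
    · rw [if_pos hc]
      have hr1' : r = 1 := by rw [hrdef, hc, div_self (ne_of_gt hb0)]
      have : ∀ p : ℝ, G p = B := by
        intro p; rw [hGdef]; simp [hr1']
      rw [intervalIntegral.integral_congr (fun p _ => this p)]
      simp only [intervalIntegral.integral_const, smul_eq_mul]
      nlinarith [hB0]
    · rw [if_neg hc]
      have hrlt1 : r < 1 := lt_of_le_of_ne hr1 (by
        intro he; exact hc (by rw [hrdef] at he; field_simp at he; linarith))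
      have hL : Real.log r < 0 := Real.log_neg hr0 hrlt1
      have hcne : (-2 * Real.log r) ≠ 0 := by linarith [hL]; 
      -- compute the integral
      have hcomp : ∀ p : ℝ, G p = B * Real.exp ((-2 * Real.log r) * p + 2 * Real.log r) := by
        intro p; rw [hGdef]; ring_nf
      rw [intervalIntegral.integral_congr (fun p (_ : p ∈ Set.uIcc (0:ℝ) 1) => hcomp p)]
      rw [intervalIntegral.integral_const_mul]
      rw [intervalIntegral.integral_comp_mul_add Real.exp hcne (2 * Real.log r)]
      rw [integral_exp]
      have e2 : Real.exp (2 * Real.log r) = r ^ 2 := by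
        rw [← Real.rpow_natCast r 2, Real.rpow_def_of_pos hr0]; ring_nf
      have hblog : Real.log (b / A) = -Real.log r := by
        rw [show b / A = r⁻¹ by rw [hrdef, inv_div], Real.log_inv]
      rw [hblog]
      have hq : r ^ ((6:ℝ)/5) ≤ r := by
        have := Real.rpow_le_rpow_of_exponent_ge hr0 hr1 (by norm_num : (1:ℝ) ≤ 6/5)
        rwa [Real.rpow_one] at this
      have hq0 : 0 < r ^ ((6:ℝ)/5) := Real.rpow_pos_of_pos hr0 _
      -- now pure algebra
      have hnegL : 0 < -Real.log r := by linarith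
      rw [smul_eq_mul]
      norm_num
      rw [← hrdef]
      rw [e2]
      rw [show -(B * ((Real.log r)⁻¹ * (1 / 2) * (1 - r ^ 2))) =
        B * (1 - r ^ 2) / (-(2 * Real.log r)) by ring]
      rw [div_le_div_iff₀ (by linarith) hnegL]
      nlinarith [mul_le_mul_of_nonneg_left hq (mul_nonneg hB0 hnegL.le),
        mul_nonneg (mul_nonneg hB0 hnegL.le) (sq_nonneg (1 - r)), hq0, hr0, hr1]
  by_cases hFint : IntervalIntegrable
      (fun p => (∫ x, |h x| ^ (1 + p ^ 2) ∂μ) ^ (2 / (1 + p ^ 2)))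
      MeasureTheory.volume 0 1
  · exact le_trans
      (intervalIntegral.integral_mono_on (by norm_num) hFint hGint key) hIG
  · rw [intervalIntegral.integral_undef hFint]
    exact le_trans (intervalIntegral.integral_nonneg (by norm_num) hG0) hIG
end
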